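/- arXiv:1411.5123 — 3 statements merged into one kernel-verified Lean document; each statement's English description precedes it below -/
import Mathlib

section
/- Let G be a finite simple graph with no isolated vertices and minimum degree δ ≥ 1, let 0 < α ≤ 1/3, and let μ ≥ 0. Consider any run of pushes starting from a state (p₀, r₀) with r₀ ≥ 0 and r₀(v) ≤ μ for every vertex v. Then for every S ⊆ V with |∂S| ≤ δ, the total net flow of mass across the cut into S during the run, namely ∑ over edges {u,v} ∈ ∂S with u ∉ S and v ∈ S of F(u,v), has absolute value at most μ/(2α). -/
open scoped Classical
open Finset

noncomputable section

variable {V : Type*} [Fintype V]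

/-- The push operation at vertex `u` on a state `(p, r)` of settled and residual mass:
a fraction `α` of the residual mass at `u` settles at `u`, half of the rest is spread
evenly to the neighbors of `u`, and half stays at `u`. -/
def push (G : SimpleGraph V) (α : ℝ) (u : V) (s : (V → ℝ) × (V → ℝ)) :
    (V → ℝ) × (V → ℝ) :=
  (fun w => if w = u then s.1 u + α * s.2 u else s.1 w,
   fun w =>
     if w = u then (1 - α) * s.2 u / 2
     else if G.Adj u w then s.2 w + (1 - α) * s.2 u / (2 * (G.degree u : ℝ))
     else s.2 w)

/-- The state obtained from `init` by successively pushing at the vertices of the list `us`. -/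
def runState (G : SimpleGraph V) (α : ℝ) (init : (V → ℝ) × (V → ℝ)) (us : List V) :
    (V → ℝ) × (V → ℝ) :=
  us.foldl (fun s u => push G α u s) init

/-- The net flow over the ordered pair `(u, v)` during the run of pushes at the vertices of
`us` started at state `s`: the sum over pushes at `u` of the mass sent along `(u,v)` minus
the sum over pushes at `v` of the mass sent along `(v,u)`. -/
def netFlow (G : SimpleGraph V) (α : ℝ) (u v : V) :
    (V → ℝ) × (V → ℝ) → List V → ℝ
  | _, [] => 0
  | s, w :: ws =>
      ((if w = u then (1 - α) * s.2 u / (2 * (G.degree u : ℝ)) else 0) -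
        (if w = v then (1 - α) * s.2 v / (2 * (G.degree v : ℝ)) else 0)) +
      netFlow G α u v (push G α w s) ws

/-- The set of edges of `G` with exactly one endpoint in `S`. -/
def bdry (G : SimpleGraph V) (S : Finset V) : Finset (Sym2 V) :=
  G.edgeFinset.filter fun e => ∃ u v, u ∈ S ∧ v ∉ S ∧ e = s(u, v)

/-- Total residual mass pushed at `u` over the run. -/
def pushedAt (G : SimpleGraph V) (α : ℝ) (u : V) :
    (V → ℝ) × (V → ℝ) → List V → ℝ
  | _, [] => 0
  | s, w :: ws => (if w = u then s.2 u else 0) + pushedAt G α u (push G α w s) ws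

lemma netFlow_eq_pushedAt (G : SimpleGraph V) (α : ℝ) (u v : V)
    (s : (V → ℝ) × (V → ℝ)) (us : List V) :
    netFlow G α u v s us =
      (1 - α) * pushedAt G α u s us / (2 * (G.degree u : ℝ)) -
      (1 - α) * pushedAt G α v s us / (2 * (G.degree v : ℝ)) := by
  induction us generalizing s with
  | nil => simp [netFlow, pushedAt]
  | cons w ws ih =>
      simp only [netFlow, pushedAt, ih]
      by_cases hwu : w = u <;> by_cases hwv : w = v <;>
        simp [hwu, hwv] <;> (try split_ifs with h) <;> (try subst h) <;> ring

lemma push_r_nonneg (G : SimpleGraph V) (α : ℝ) (hα0 : 0 ≤ α) (hα1 : α ≤ 1)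
    (w : V) (s : (V → ℝ) × (V → ℝ)) (h : ∀ v, 0 ≤ s.2 v) (v : V) :
    0 ≤ (push G α w s).2 v := by
  have h1 : (0:ℝ) ≤ 1 - α := by linarith
  have hd : (0:ℝ) ≤ 2 * (G.degree w : ℝ) := by positivity
  simp only [push]
  split_ifs with h1' h2'
  · have := h w; positivity
  · have := h w
    have : 0 ≤ (1 - α) * s.2 w / (2 * (G.degree w : ℝ)) := by positivity
    have := h v
    linarith
  · exact h v

lemma runState_r_nonneg (G : SimpleGraph V) (α : ℝ) (hα0 : 0 ≤ α) (hα1 : α ≤ 1)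
    (s : (V → ℝ) × (V → ℝ)) (h : ∀ v, 0 ≤ s.2 v) (us : List V) (v : V) :
    0 ≤ (runState G α s us).2 v := by
  induction us generalizing s with
  | nil => exact h v
  | cons w ws ih => exact ih _ (push_r_nonneg G α hα0 hα1 w s h)

lemma pushedAt_nonneg (G : SimpleGraph V) (α : ℝ) (hα0 : 0 ≤ α) (hα1 : α ≤ 1)
    (u : V) (s : (V → ℝ) × (V → ℝ)) (h : ∀ v, 0 ≤ s.2 v) (us : List V) :
    0 ≤ pushedAt G α u s us := by
  induction us generalizing s with
  | nil => simp [pushedAt]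
  | cons w ws ih =>
      simp only [pushedAt]
      have h1 : 0 ≤ (if w = u then s.2 u else 0) := by
        split
        · exact h u
        · exact le_refl 0
      exact add_nonneg h1 (ih _ (push_r_nonneg G α hα0 hα1 w s h))

lemma runState_r (G : SimpleGraph V) (α : ℝ) (s : (V → ℝ) × (V → ℝ)) (us : List V) (v : V) :
    (runState G α s us).2 v = s.2 v - (1 + α) / 2 * pushedAt G α v s us +
      ∑ u ∈ G.neighborFinset v,
        (1 - α) * pushedAt G α u s us / (2 * (G.degree u : ℝ)) := by
  induction us generalizing s with
  | nil => simp [runState, pushedAt]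
  | cons w ws ih =>
      have hrun : runState G α s (w :: ws) = runState G α (push G α w s) ws := rfl
      rw [hrun, ih]
      simp only [pushedAt]
      have hdist : ∀ u : V,
          (1 - α) * ((if w = u then s.2 u else 0) + pushedAt G α u (push G α w s) ws) /
              (2 * (G.degree u : ℝ)) =
            (if w = u then (1 - α) * s.2 u / (2 * (G.degree u : ℝ)) else 0) +
              (1 - α) * pushedAt G α u (push G α w s) ws / (2 * (G.degree u : ℝ)) := by
        intro u; split <;> ring
      rw [Finset.sum_congr rfl fun u _ => hdist u, Finset.sum_add_distrib,
        Finset.sum_ite_eq]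
      have hpush : (push G α w s).2 v = s.2 v - (1 + α) / 2 * (if w = v then s.2 v else 0) +
          (if w ∈ G.neighborFinset v then (1 - α) * s.2 w / (2 * (G.degree w : ℝ)) else 0) := by
        simp only [push, SimpleGraph.mem_neighborFinset]
        by_cases hvw : v = w
        · subst hvw
          simp [G.irrefl]
          ring
        · have hwv : ¬ (w = v) := fun h => hvw h.symm
          by_cases hadj : G.Adj w v
          · have hadj' : G.Adj v w := hadj.symm
            simp [hvw, hwv, hadj, hadj']
          · have hadj' : ¬ G.Adj v w := fun h => hadj h.symm
            simp [hvw, hwv, hadj, hadj']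
      rw [hpush]
      ring

lemma pushedAt_div_le (G : SimpleGraph V) [Nonempty V]
    (hd : ∀ v : V, 0 < G.degree v)
    (δ : ℕ) (hδd : ∀ v : V, δ ≤ G.degree v) (hδ1 : 1 ≤ δ)
    (α : ℝ) (hα0 : 0 < α) (hα1 : α ≤ 1)
    (μ : ℝ) (hμ : 0 ≤ μ)
    (s : (V → ℝ) × (V → ℝ)) (hr0 : ∀ v, 0 ≤ s.2 v) (hrμ : ∀ v, s.2 v ≤ μ)
    (us : List V) (v : V) :
    pushedAt G α v s us / (G.degree v : ℝ) ≤ μ / (α * δ) := by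
  obtain ⟨v0, -, hmax⟩ := Finset.exists_max_image Finset.univ
      (fun u => pushedAt G α u s us / (G.degree u : ℝ)) ⟨Classical.arbitrary V, Finset.mem_univ _⟩
  have hmax' : ∀ u : V, pushedAt G α u s us / (G.degree u : ℝ) ≤
      pushedAt G α v0 s us / (G.degree v0 : ℝ) := fun u => hmax u (Finset.mem_univ u)
  set M := pushedAt G α v0 s us / (G.degree v0 : ℝ) with hM
  have hd0 : (0:ℝ) < (G.degree v0 : ℝ) := by exact_mod_cast hd v0
  have hend : 0 ≤ (runState G α s us).2 v0 :=
    runState_r_nonneg G α hα0.le hα1 s hr0 us v0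
  rw [runState_r] at hend
  have hsum : ∑ u ∈ G.neighborFinset v0,
      (1 - α) * pushedAt G α u s us / (2 * (G.degree u : ℝ)) ≤
      (G.degree v0 : ℝ) * ((1 - α) / 2 * M) := by
    have hterm : ∀ u ∈ G.neighborFinset v0,
        (1 - α) * pushedAt G α u s us / (2 * (G.degree u : ℝ)) ≤ (1 - α) / 2 * M := by
      intro u _
      have h1 : (1 - α) * pushedAt G α u s us / (2 * (G.degree u : ℝ))
          = (1 - α) / 2 * (pushedAt G α u s us / (G.degree u : ℝ)) := by ring
      rw [h1]
      exact mul_le_mul_of_nonneg_left (hmax' u) (by linarith)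
    calc ∑ u ∈ G.neighborFinset v0,
          (1 - α) * pushedAt G α u s us / (2 * (G.degree u : ℝ))
        ≤ ∑ _u ∈ G.neighborFinset v0, (1 - α) / 2 * M := Finset.sum_le_sum hterm
      _ = (G.degree v0 : ℝ) * ((1 - α) / 2 * M) := by
          rw [Finset.sum_const, nsmul_eq_mul, G.card_neighborFinset_eq_degree]
  have hPv0 : pushedAt G α v0 s us = M * (G.degree v0 : ℝ) := by
    rw [hM, div_mul_cancel₀ _ (ne_of_gt hd0)]
  have hμ0 : s.2 v0 ≤ μ := hrμ v0
  rw [hPv0] at hend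
  have hMd : M * (α * (G.degree v0 : ℝ)) ≤ μ := by nlinarith
  have hM1 : M ≤ μ / (α * (G.degree v0 : ℝ)) := by
    rw [le_div_iff₀ (by positivity)]
    exact hMd
  have hM2 : M ≤ μ / (α * (δ : ℝ)) := by
    refine hM1.trans ?_
    have hδle : (δ : ℝ) ≤ (G.degree v0 : ℝ) := by exact_mod_cast hδd v0
    have hδpos : (0:ℝ) < (δ : ℝ) := by exact_mod_cast hδ1
    gcongr
  exact (hmax' v).trans hM2

theorem stmt10 {V : Type*} [Fintype V] [Nonempty V] (G : SimpleGraph V)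
    (hd : ∀ v : V, 0 < G.degree v)
    (δ : ℕ) (hδ : δ = G.minDegree) (hδ1 : 1 ≤ δ)
    (α : ℝ) (hα0 : 0 < α) (hα : α ≤ 1 / 3)
    (μ : ℝ) (hμ : 0 ≤ μ)
    (init : (V → ℝ) × (V → ℝ))
    (hr0 : ∀ v : V, 0 ≤ init.2 v)
    (hrμ : ∀ v : V, init.2 v ≤ μ)
    (us : List V) (S : Finset V) (hS : (bdry G S).card ≤ δ) :
    |∑ u ∈ Sᶜ, ∑ v ∈ S, if G.Adj u v then netFlow G α u v init us else 0| ≤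
      μ / (2 * α) := by
  have hα1 : α ≤ 1 := by linarith
  have hδd : ∀ v : V, δ ≤ G.degree v := fun v => hδ ▸ G.minDegree_le_degree v
  have hδpos : (0:ℝ) < (δ : ℝ) := by exact_mod_cast hδ1
  set B : ℝ := (1 - α) / 2 * (μ / (α * δ)) with hB
  have hB0 : 0 ≤ B := by
    apply mul_nonneg (by linarith)
    positivity
  have key : ∀ u v : V, |netFlow G α u v init us| ≤ B := by
    intro u v
    rw [netFlow_eq_pushedAt]
    have bnd : ∀ w : V, 0 ≤ (1 - α) * pushedAt G α w init us / (2 * (G.degree w : ℝ)) ∧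
        (1 - α) * pushedAt G α w init us / (2 * (G.degree w : ℝ)) ≤ B := by
      intro w
      have hP0 : 0 ≤ pushedAt G α w init us := pushedAt_nonneg G α hα0.le hα1 w init hr0 us
      have hdw : (0:ℝ) < (G.degree w : ℝ) := by exact_mod_cast hd w
      constructor
      · exact div_nonneg (mul_nonneg (by linarith) hP0) (by positivity)
      · have h1 : (1 - α) * pushedAt G α w init us / (2 * (G.degree w : ℝ))
            = (1 - α) / 2 * (pushedAt G α w init us / (G.degree w : ℝ)) := by ring
        rw [h1, hB]
        exact mul_le_mul_of_nonneg_left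
          (pushedAt_div_le G hd δ hδd hδ1 α hα0 hα1 μ hμ init hr0 hrμ us w) (by linarith)
    obtain ⟨ha0, haB⟩ := bnd u
    obtain ⟨hb0, hbB⟩ := bnd v
    rw [abs_le]
    constructor <;> linarith
  have hcount : (((Sᶜ : Finset V) ×ˢ S).filter fun p => G.Adj p.1 p.2).card ≤ δ := by
    refine le_trans (Finset.card_le_card_of_injOn (fun p => s(p.1, p.2)) ?_ ?_) hS
    · rintro ⟨a, b⟩ hp
      simp only [Finset.mem_coe, Finset.mem_filter, Finset.mem_product, Finset.mem_compl] at hp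
      obtain ⟨⟨haS, hbS⟩, hadj⟩ := hp
      simp only [Finset.mem_coe, bdry, Finset.mem_filter, SimpleGraph.mem_edgeFinset, SimpleGraph.mem_edgeSet]
      exact ⟨hadj, b, a, hbS, haS, Sym2.eq_swap⟩
    · rintro ⟨a, b⟩ ha ⟨c, d⟩ hcd h
      simp only [Finset.coe_filter, Set.mem_setOf_eq, Finset.mem_product,
        Finset.mem_compl] at ha hcd
      simp only at h
      rcases Sym2.eq_iff.mp h with ⟨h1, h2⟩ | ⟨h1, h2⟩
      · simp [h1, h2]
      · obtain ⟨⟨haS, hbS⟩, -⟩ := ha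
        obtain ⟨⟨hcS, hdS⟩, -⟩ := hcd
        subst h1
        exact absurd hdS haS
  calc |∑ u ∈ Sᶜ, ∑ v ∈ S, if G.Adj u v then netFlow G α u v init us else 0|
      ≤ ∑ u ∈ Sᶜ, ∑ v ∈ S, |if G.Adj u v then netFlow G α u v init us else 0| :=
        le_trans (Finset.abs_sum_le_sum_abs _ _)
          (Finset.sum_le_sum fun u _ => Finset.abs_sum_le_sum_abs _ _)
    _ ≤ ∑ u ∈ Sᶜ, ∑ v ∈ S, (if G.Adj u v then B else 0) := by
        refine Finset.sum_le_sum fun u _ => Finset.sum_le_sum fun v _ => ?_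
        split
        · exact key u v
        · simp
    _ = ((((Sᶜ : Finset V) ×ˢ S).filter fun p => G.Adj p.1 p.2).card : ℝ) * B := by
        rw [← Finset.sum_product', ← Finset.sum_filter, Finset.sum_const, nsmul_eq_mul]
    _ ≤ (δ : ℝ) * B := by
        exact mul_le_mul_of_nonneg_right (by exact_mod_cast hcount) hB0
    _ ≤ μ / (2 * α) := by
        have hδne : (δ : ℝ) ≠ 0 := ne_of_gt hδpos
        have heq : (δ : ℝ) * B = (1 - α) * μ / (2 * α) := by
          rw [hB]; field_simp
        rw [heq]
        gcongr
        nlinarith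

end
end

section
/- Let G be a finite simple graph with no isolated vertices and m ≥ 1 edges, let 0 < α ≤ 1/3, and let p be the settled mass after any run of pushes starting from (p₀, r₀) with p₀ = 0, r₀ = p° ≥ 0 and ∑_v p°(v) = 1. Suppose 0 ≤ τ < t₀, vol(V^p_{<t₀}) ≤ m, and V^p_{<τ} is nonempty. Then there exists t ∈ [τ, t₀) such that Φ(V^p_{<t}) ≤ sqrt( 42α / ((t₀ − τ) · vol(V^p_{<τ})) ). -/
open scoped Classical
open Finset

noncomputable section

variable {V : Type*} [Fintype V]

/-- The volume of `S`: the sum of the degrees of the vertices of `S`. -/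
def vol (G : SimpleGraph V) (S : Finset V) : ℕ := ∑ v ∈ S, G.degree v

/-- The conductance `Φ(S) = |∂S| / min(vol S, 2m − vol S)`. -/
def conduct (G : SimpleGraph V) (S : Finset V) : ℝ :=
  ((bdry G S).card : ℝ) /
    ((min (vol G S) (2 * G.edgeFinset.card - vol G S) : ℕ) : ℝ)

/-- The set of vertices of density at least `t` with respect to the mass distribution `p`. -/
def Vge (G : SimpleGraph V) (p : V → ℝ) (t : ℝ) : Finset V :=
  Finset.univ.filter fun v => t ≤ p v / (G.degree v : ℝ)

/-- The set of vertices of density greater than `t` with respect to the mass distribution `p`. -/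
def Vgt (G : SimpleGraph V) (p : V → ℝ) (t : ℝ) : Finset V :=
  Finset.univ.filter fun v => t < p v / (G.degree v : ℝ)

/-- The set of vertices of density less than `t` with respect to the mass distribution `p`. -/
def Vlt (G : SimpleGraph V) (p : V → ℝ) (t : ℝ) : Finset V :=
  Finset.univ.filter fun v => p v / (G.degree v : ℝ) < t

lemma runState_cons (G : SimpleGraph V) (α : ℝ) (init : (V → ℝ) × (V → ℝ)) (u : V)
    (us : List V) : runState G α init (u :: us) = runState G α (push G α u init) us := rfl

lemma push_nonneg (G : SimpleGraph V) {α : ℝ} (hα0 : 0 ≤ α) (hα1 : α ≤ 1) (u : V)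
    {s : (V → ℝ) × (V → ℝ)} (h1 : ∀ v, 0 ≤ s.1 v) (h2 : ∀ v, 0 ≤ s.2 v) :
    (∀ v, 0 ≤ (push G α u s).1 v) ∧ (∀ v, 0 ≤ (push G α u s).2 v) := by
  have h1a : 0 ≤ 1 - α := by linarith
  constructor <;> intro v <;> simp only [push]
  · split_ifs with h
    · exact add_nonneg (h1 u) (mul_nonneg hα0 (h2 u))
    · exact h1 v
  · split_ifs with h h'
    · exact div_nonneg (mul_nonneg h1a (h2 u)) (by norm_num)
    · exact add_nonneg (h2 v) (div_nonneg (mul_nonneg h1a (h2 u)) (by positivity))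
    · exact h2 v

lemma run_nonneg (G : SimpleGraph V) {α : ℝ} (hα0 : 0 ≤ α) (hα1 : α ≤ 1)
    (us : List V) : ∀ (init : (V → ℝ) × (V → ℝ)), (∀ v, 0 ≤ init.1 v) → (∀ v, 0 ≤ init.2 v) →
    (∀ v, 0 ≤ (runState G α init us).1 v) ∧ (∀ v, 0 ≤ (runState G α init us).2 v) := by
  induction us with
  | nil => intro init h1 h2; exact ⟨h1, h2⟩
  | cons u us ih =>
      intro init h1 h2
      rw [runState_cons]
      obtain ⟨g1, g2⟩ := push_nonneg G hα0 hα1 u h1 h2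
      exact ih _ g1 g2

lemma push_invariant (G : SimpleGraph V) {α : ℝ} (p0 : V → ℝ) (w : V)
    (s : (V → ℝ) × (V → ℝ))
    (hs : ∀ v, 2*α*s.2 v = 2*α*p0 v
      + (1-α) * (∑ u ∈ G.neighborFinset v, s.1 u / (G.degree u : ℝ)) - (1+α) * s.1 v) :
    ∀ v, 2*α*(push G α w s).2 v = 2*α*p0 v
      + (1-α) * (∑ u ∈ G.neighborFinset v, (push G α w s).1 u / (G.degree u : ℝ))
      - (1+α) * (push G α w s).1 v := by
  have hsum : ∀ v : V, (∑ u ∈ G.neighborFinset v, (push G α w s).1 u / (G.degree u : ℝ))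
      = (∑ u ∈ G.neighborFinset v, s.1 u / (G.degree u : ℝ))
        + (if w ∈ G.neighborFinset v then α * s.2 w / (G.degree w : ℝ) else 0) := by
    intro v
    have : ∀ u ∈ G.neighborFinset v, (push G α w s).1 u / (G.degree u : ℝ)
        = s.1 u / (G.degree u : ℝ) + (if u = w then α * s.2 w / (G.degree w : ℝ) else 0) := by
      intro u _
      simp only [push]
      split_ifs with h
      · subst h; rw [add_div]
      · rw [add_zero]
    rw [Finset.sum_congr rfl this, Finset.sum_add_distrib, Finset.sum_ite_eq']
  intro v
  rw [hsum v]
  by_cases hvw : v = w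
  · subst hvw
    have hnot : v ∉ G.neighborFinset v := by
      simp [SimpleGraph.mem_neighborFinset]
    simp only [push, if_pos rfl, if_neg hnot, add_zero, ite_true, eq_self_iff_true]
    linear_combination hs v
  · by_cases hadj : G.Adj w v
    · have hmem : w ∈ G.neighborFinset v := by
        rw [SimpleGraph.mem_neighborFinset]; exact hadj.symm
      simp only [push, if_neg hvw, if_pos hadj, if_pos hmem]
      linear_combination hs v
    · have hmem : w ∉ G.neighborFinset v := by
        rw [SimpleGraph.mem_neighborFinset]
        exact fun h => hadj h.symm
      simp only [push, if_neg hvw, if_neg hadj, if_neg hmem, add_zero]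
      linear_combination hs v

lemma run_invariant (G : SimpleGraph V) {α : ℝ} (p0 : V → ℝ) (us : List V) :
    ∀ (init : (V → ℝ) × (V → ℝ)),
    (∀ v, 2*α*init.2 v = 2*α*p0 v
      + (1-α) * (∑ u ∈ G.neighborFinset v, init.1 u / (G.degree u : ℝ)) - (1+α) * init.1 v) →
    ∀ v, 2*α*(runState G α init us).2 v = 2*α*p0 v
      + (1-α) * (∑ u ∈ G.neighborFinset v, (runState G α init us).1 u / (G.degree u : ℝ))
      - (1+α) * (runState G α init us).1 v := by
  induction us with
  | nil => intro init h; exact h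
  | cons u us ih =>
      intro init h
      rw [runState_cons]
      exact ih _ (push_invariant G p0 u init h)


def cutP (G : SimpleGraph V) (S : Finset V) : Finset (V × V) :=
  Finset.univ.filter fun x => x.1 ∈ S ∧ x.2 ∉ S ∧ G.Adj x.1 x.2

lemma sum_nbr (G : SimpleGraph V) (f : V → ℝ) :
    ∑ v, ∑ u ∈ G.neighborFinset v, f u = ∑ u, (G.degree u : ℝ) * f u := by
  calc ∑ v, ∑ u ∈ G.neighborFinset v, f u
      = ∑ v, ∑ u, if G.Adj v u then f u else 0 := by
        refine Finset.sum_congr rfl fun v _ => ?_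
        rw [SimpleGraph.neighborFinset_eq_filter, Finset.sum_filter]
    _ = ∑ u, ∑ v, if G.Adj v u then f u else 0 := Finset.sum_comm
    _ = ∑ u, (G.degree u : ℝ) * f u := by
        refine Finset.sum_congr rfl fun u _ => ?_
        have h1 : ∀ v : V, G.Adj v u ↔ G.Adj u v := fun v => G.adj_comm v u
        rw [Finset.sum_congr rfl (fun v _ => by rw [if_congr (h1 v) rfl rfl])]
        rw [← Finset.sum_filter, ← SimpleGraph.neighborFinset_eq_filter,
          Finset.sum_const, SimpleGraph.card_neighborFinset_eq_degree, nsmul_eq_mul]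

lemma pairSum (G : SimpleGraph V) (S : Finset V) (P : V → Prop) (F : V → V → ℝ) :
    ∑ x ∈ Finset.univ.filter (fun x : V × V => x.1 ∈ S ∧ P x.2 ∧ G.Adj x.1 x.2), F x.1 x.2
      = ∑ v ∈ S, ∑ u ∈ (G.neighborFinset v).filter P, F v u := by
  rw [Finset.sum_filter, Fintype.sum_prod_type]
  have h1 : ∀ v : V, (∑ u, if v ∈ S ∧ P u ∧ G.Adj v u then F v u else 0)
      = if v ∈ S then ∑ u ∈ (G.neighborFinset v).filter P, F v u else 0 := by
    intro v
    by_cases hv : v ∈ S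
    · rw [if_pos hv, Finset.sum_filter, SimpleGraph.neighborFinset_eq_filter,
        Finset.sum_filter]
      refine Finset.sum_congr rfl fun u _ => ?_
      by_cases hP : P u
      · by_cases hA : G.Adj v u
        · simp [hv, hP, hA]
        · simp [hv, hP, hA]
      · simp [hv, hP]
    · rw [if_neg hv]
      refine Finset.sum_eq_zero fun u _ => ?_
      rw [if_neg (by tauto)]
  rw [Finset.sum_congr rfl fun v _ => h1 v, ← Finset.sum_filter,
    Finset.filter_mem_eq_inter, Finset.univ_inter]

lemma inner_zero (G : SimpleGraph V) (S : Finset V) (q : V → ℝ) :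
    ∑ x ∈ Finset.univ.filter (fun x : V × V => x.1 ∈ S ∧ x.2 ∈ S ∧ G.Adj x.1 x.2),
      (q x.2 - q x.1) = 0 := by
  refine Finset.sum_involution (fun x _ => (x.2, x.1)) ?_ ?_ ?_ ?_
  · intro x hx; ring
  · intro x hx h
    intro hswap
    apply h
    have h2 : x.2 = x.1 := congrArg Prod.fst hswap
    rw [h2]; ring
  · intro x hx
    simp only [Finset.mem_filter, Finset.mem_univ, true_and] at hx ⊢
    exact ⟨hx.2.1, hx.1, hx.2.2.symm⟩
  · intro x hx; rfl

lemma cut_sum_le (G : SimpleGraph V) (hd : ∀ v : V, 0 < G.degree v) (S : Finset V)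
    (p p0 : V → ℝ) (c : ℝ)
    (hL : ∀ v, p v - ∑ u ∈ G.neighborFinset v, p u / (G.degree u : ℝ) ≤ c * p0 v)
    (hp0 : ∀ v, 0 ≤ p0 v) (hc : 0 ≤ c) (hsum1 : ∑ v, p0 v = 1) :
    ∑ x ∈ cutP G S, (p x.2 / (G.degree x.2 : ℝ) - p x.1 / (G.degree x.1 : ℝ)) ≤ c := by
  set q : V → ℝ := fun v => p v / (G.degree v : ℝ) with hq
  have hdeg : ∀ v : V, ((G.degree v : ℝ)) ≠ 0 := by
    intro v
    have := hd v
    positivity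
  have hdq : ∀ v : V, (G.degree v : ℝ) * q v = p v := by
    intro v
    rw [hq, mul_comm, div_mul_cancel₀ _ (hdeg v)]
  have htot : ∑ v, (p v - ∑ u ∈ G.neighborFinset v, q u) = 0 := by
    rw [Finset.sum_sub_distrib, sum_nbr G q, sub_eq_zero]
    exact Finset.sum_congr rfl fun v _ => (hdq v).symm
  have hS : ∑ x ∈ cutP G S, (q x.2 - q x.1)
      = -∑ v ∈ S, (p v - ∑ u ∈ G.neighborFinset v, q u) := by
    have h1 : ∑ x ∈ cutP G S, (q x.2 - q x.1)
        = ∑ v ∈ S, ∑ u ∈ (G.neighborFinset v).filter (fun u => u ∉ S), (q u - q v) := by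
      rw [cutP]
      convert pairSum G S (fun u => u ∉ S) (fun v u => q u - q v) using 2
      all_goals
        first
        | exact Finset.filter_congr_decidable _ _ _
        | exact Finset.sum_congr (Finset.filter_congr_decidable _ _ _) (fun _ _ => rfl)
        | exact (Finset.sum_congr (Finset.filter_congr_decidable _ _ _) (fun _ _ => rfl)).symm
        | rfl
        | (ext x; simp only [Finset.mem_filter])
    rw [h1]
    have hsplit : ∀ v ∈ S,
        ∑ u ∈ (G.neighborFinset v).filter (fun u => u ∉ S), (q u - q v)
        = (∑ u ∈ G.neighborFinset v, (q u - q v))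
          - ∑ u ∈ (G.neighborFinset v).filter (fun u => u ∈ S), (q u - q v) := by
      intro v _
      rw [eq_sub_iff_add_eq, add_comm,
        Finset.sum_filter_add_sum_filter_not (G.neighborFinset v) (fun u => u ∈ S)]
    rw [Finset.sum_congr rfl hsplit, Finset.sum_sub_distrib]
    have hzero : ∑ v ∈ S, ∑ u ∈ (G.neighborFinset v).filter (fun u => u ∈ S), (q u - q v)
        = 0 := by
      have h2 := pairSum G S (fun u => u ∈ S) (fun v u => q u - q v)
      rw [← inner_zero G S q]
      convert h2.symm using 2
      all_goals
        first
        | exact Finset.filter_congr_decidable _ _ _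
        | exact Finset.sum_congr (Finset.filter_congr_decidable _ _ _) (fun _ _ => rfl)
        | exact (Finset.sum_congr (Finset.filter_congr_decidable _ _ _) (fun _ _ => rfl)).symm
        | rfl
        | (ext x; simp only [Finset.mem_filter])
    rw [hzero, sub_zero, ← Finset.sum_neg_distrib]
    refine Finset.sum_congr rfl fun v _ => ?_
    rw [Finset.sum_sub_distrib, Finset.sum_const, SimpleGraph.card_neighborFinset_eq_degree,
      nsmul_eq_mul, hdq v]
    ring
  have hS2 : ∑ x ∈ cutP G S, (q x.2 - q x.1)
      = ∑ v ∈ Finset.univ \ S, (p v - ∑ u ∈ G.neighborFinset v, q u) := by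
    rw [hS]
    have := Finset.sum_sdiff (f := fun v => p v - ∑ u ∈ G.neighborFinset v, q u)
      (Finset.subset_univ S)
    linarith [this, htot]
  calc ∑ x ∈ cutP G S, (q x.2 - q x.1)
      = ∑ v ∈ Finset.univ \ S, (p v - ∑ u ∈ G.neighborFinset v, q u) := hS2
    _ ≤ ∑ v ∈ Finset.univ \ S, c * p0 v :=
        Finset.sum_le_sum fun v _ => hL v
    _ ≤ ∑ v, c * p0 v := by
        refine Finset.sum_le_sum_of_subset_of_nonneg (Finset.sdiff_subset) ?_
        intro v _ _
        exact mul_nonneg hc (hp0 v)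
    _ = c := by rw [← Finset.mul_sum, hsum1, mul_one]

lemma cutP_fiber_card_le (G : SimpleGraph V) (A : Finset (V × V))
    (hA : ∀ x ∈ A, G.Adj x.1 x.2) (u : V) :
    (A.filter (fun x => x.2 = u)).card ≤ G.degree u := by
  rw [← SimpleGraph.card_neighborFinset_eq_degree]
  refine Finset.card_le_card_of_injOn (fun x => x.1) ?_ ?_
  · intro x hx
    rw [Finset.mem_coe, Finset.mem_filter] at hx
    rw [Finset.mem_coe, SimpleGraph.mem_neighborFinset]
    have := hA x hx.1
    rw [hx.2] at this
    exact this.symm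
  · intro x hx y hy hxy
    rw [Finset.mem_coe, Finset.mem_filter] at hx hy
    exact Prod.ext hxy (hx.2.trans hy.2.symm)

lemma cutP_fst_card_le (G : SimpleGraph V) (A : Finset (V × V))
    (hA : ∀ x ∈ A, G.Adj x.1 x.2) (v : V) :
    (A.filter (fun x => x.1 = v)).card ≤ G.degree v := by
  rw [← SimpleGraph.card_neighborFinset_eq_degree]
  refine Finset.card_le_card_of_injOn (fun x => x.2) ?_ ?_
  · intro x hx
    rw [Finset.mem_coe, Finset.mem_filter] at hx
    rw [Finset.mem_coe, SimpleGraph.mem_neighborFinset]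
    have := hA x hx.1
    rw [hx.2] at this
    exact this
  · intro x hx y hy hxy
    rw [Finset.mem_coe, Finset.mem_filter] at hx hy
    exact Prod.ext (hx.2.trans hy.2.symm) hxy

lemma cutP_card_le_vol (G : SimpleGraph V) (S : Finset V) :
    (cutP G S).card ≤ vol G S := by
  have hmem : ∀ x ∈ cutP G S, x.1 ∈ S := by
    intro x hx
    rw [cutP, Finset.mem_filter] at hx
    exact hx.2.1
  rw [Finset.card_eq_sum_card_fiberwise hmem, vol]
  refine Finset.sum_le_sum fun v _ => ?_
  refine cutP_fst_card_le G _ ?_ v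
  intro x hx
  rw [cutP, Finset.mem_filter] at hx
  exact hx.2.2.2

lemma small_growth (G : SimpleGraph V) (S T : Finset V) (hST : S ⊆ T)
    (A : Finset (V × V)) (hadj : ∀ x ∈ A, G.Adj x.1 x.2)
    (hout : ∀ x ∈ A, x.2 ∉ S) (hin : ∀ x ∈ A, x.2 ∈ T) :
    A.card + vol G S ≤ vol G T := by
  have hmem : ∀ x ∈ A, x.2 ∈ T \ S := by
    intro x hx
    rw [Finset.mem_sdiff]
    exact ⟨hin x hx, hout x hx⟩
  have h1 : A.card ≤ ∑ u ∈ T \ S, G.degree u := by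
    rw [Finset.card_eq_sum_card_fiberwise hmem]
    exact Finset.sum_le_sum fun u _ => cutP_fiber_card_le G A hadj u
  have h2 : ∑ u ∈ T \ S, G.degree u + vol G S = vol G T := by
    rw [vol, vol]
    exact Finset.sum_sdiff hST
  omega

lemma bdry_card_eq (G : SimpleGraph V) (S : Finset V) :
    (bdry G S).card = (cutP G S).card := by
  refine (Finset.card_bij (fun x _ => s(x.1, x.2)) ?_ ?_ ?_).symm
  · intro x hx
    rw [cutP, Finset.mem_filter] at hx
    rw [bdry, Finset.mem_filter]
    refine ⟨?_, x.1, x.2, hx.2.1, hx.2.2.1, rfl⟩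
    rw [SimpleGraph.mem_edgeFinset, SimpleGraph.mem_edgeSet]
    exact hx.2.2.2
  · intro x hx y hy hxy
    rw [cutP, Finset.mem_filter] at hx hy
    rw [Sym2.eq_iff] at hxy
    rcases hxy with ⟨h1, h2⟩ | ⟨h1, h2⟩
    · exact Prod.ext h1 h2
    · exact absurd hx.2.1 (by rw [h1]; exact hy.2.2.1)
  · intro e he
    rw [bdry, Finset.mem_filter] at he
    obtain ⟨he1, u, v, hu, hv, rfl⟩ := he
    refine ⟨(u, v), ?_, rfl⟩
    rw [cutP, Finset.mem_filter]
    rw [SimpleGraph.mem_edgeFinset, SimpleGraph.mem_edgeSet] at he1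
    exact ⟨Finset.mem_univ _, hu, hv, he1⟩


set_option maxHeartbeats 1000000

theorem stmt12 {V : Type*} [Fintype V] (G : SimpleGraph V)
    (m : ℕ) (hm : m = G.edgeFinset.card) (hm1 : 1 ≤ m)
    (hd : ∀ v : V, 0 < G.degree v)
    (α : ℝ) (hα0 : 0 < α) (hα : α ≤ 1 / 3)
    (p0 : V → ℝ) (hp0 : ∀ v, 0 ≤ p0 v) (hsum : ∑ v, p0 v = 1)
    (us : List V)
    (p : V → ℝ) (hp : p = (runState G α ((fun _ => 0), p0) us).1)
    (τ t0 : ℝ) (hτ0 : 0 ≤ τ) (hτt : τ < t0)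
    (hvol : vol G (Vlt G p t0) ≤ m)
    (hne : (Vlt G p τ).Nonempty) :
    ∃ t : ℝ, τ ≤ t ∧ t < t0 ∧
      conduct G (Vlt G p t) ≤
        Real.sqrt (42 * α / ((t0 - τ) * (vol G (Vlt G p τ) : ℝ))) := by
  classical
  have hα1 : α ≤ 1 := by linarith
  have hdeg : ∀ v : V, (0:ℝ) < (G.degree v : ℝ) := by
    intro v; exact_mod_cast hd v
  -- nonnegativity of p and r
  obtain ⟨hpnn', hrnn⟩ := run_nonneg G hα0.le hα1 us ((fun _ => 0), p0)
    (fun v => le_refl 0) hp0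
  have hpnn : ∀ v, 0 ≤ p v := by rw [hp]; exact hpnn'
  -- the invariant
  have hbase : ∀ v, 2*α*(((fun _ : V => (0:ℝ)), p0) : (V → ℝ) × (V → ℝ)).2 v
      = 2*α*p0 v
        + (1-α) * (∑ u ∈ G.neighborFinset v,
            (((fun _ : V => (0:ℝ)), p0) : (V → ℝ) × (V → ℝ)).1 u / (G.degree u : ℝ))
        - (1+α) * (((fun _ : V => (0:ℝ)), p0) : (V → ℝ) × (V → ℝ)).1 v := by
    intro v; simp
  have hinv := run_invariant G p0 us ((fun _ => 0), p0) hbase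
  -- pointwise Laplacian bound : p v - ∑_{u ~ v} p u / d u ≤ 3 α p0 v
  have hL : ∀ v, p v - ∑ u ∈ G.neighborFinset v, p u / (G.degree u : ℝ) ≤ 3*α * p0 v := by
    intro v
    have h1 := hinv v
    rw [← hp] at h1
    have h2 : 0 ≤ 2*α*(runState G α ((fun _ => 0), p0) us).2 v :=
      mul_nonneg (by linarith) (hrnn v)
    rw [h1] at h2
    have h3 : (1+α) * p v ≤ 2*α*p0 v
        + (1-α) * (∑ u ∈ G.neighborFinset v, p u / (G.degree u : ℝ)) := by linarith
    set Sv : ℝ := ∑ u ∈ G.neighborFinset v, p u / (G.degree u : ℝ) with hSv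
    have h4 : (1-α)*(p v - Sv) ≤ 2*α*p0 v - 2*α*(p v) := by nlinarith [h3]
    have h5 : 2*α*p0 v - 2*α*(p v) ≤ (1-α)*(3*α*p0 v) := by
      nlinarith [mul_nonneg hα0.le (hpnn v),
        mul_nonneg (mul_nonneg hα0.le (by linarith : (0:ℝ) ≤ 1 - 3*α)) (hp0 v)]
    have h6 : (1-α)*(p v - Sv) ≤ (1-α)*(3*α*p0 v) := by linarith
    have h7 : (0:ℝ) < 1 - α := by linarith
    exact le_of_mul_le_mul_left h6 h7
  -- notation
  set Vτr : ℝ := (vol G (Vlt G p τ) : ℝ) with hVτr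
  set φ : ℝ := Real.sqrt (42 * α / ((t0 - τ) * Vτr)) with hφdef
  -- basic volume facts
  have hvolmono : ∀ {a b : ℝ}, a ≤ b → Vlt G p a ⊆ Vlt G p b := by
    intro a b hab
    intro v hv
    rw [Vlt, Finset.mem_filter] at hv ⊢
    exact ⟨hv.1, lt_of_lt_of_le hv.2 hab⟩
  have hvolmono' : ∀ {a b : ℝ}, a ≤ b → vol G (Vlt G p a) ≤ vol G (Vlt G p b) := by
    intro a b hab
    exact Finset.sum_le_sum_of_subset (hvolmono hab)
  have hVτ1 : (1:ℝ) ≤ Vτr := by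
    obtain ⟨v0, hv0⟩ := hne
    have h1 : 1 ≤ vol G (Vlt G p τ) := by
      calc 1 ≤ G.degree v0 := hd v0
        _ ≤ vol G (Vlt G p τ) :=
          Finset.single_le_sum (f := fun v => G.degree v) (fun i _ => Nat.zero_le _) hv0
    rw [hVτr]
    exact_mod_cast h1
  have hVτ0 : (0:ℝ) < Vτr := by linarith
  have hvolpos : ∀ t : ℝ, τ ≤ t → (0:ℝ) < (vol G (Vlt G p t) : ℝ) := by
    intro t ht
    have := hvolmono' ht
    have h2 : (Vτr : ℝ) ≤ (vol G (Vlt G p t) : ℝ) := by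
      rw [hVτr]; exact_mod_cast this
    linarith
  have hvol_le : ∀ t : ℝ, t ≤ t0 → vol G (Vlt G p t) ≤ m :=
    fun t ht => le_trans (hvolmono' ht) hvol
  -- conductance formula in the relevant regime
  have hconduct : ∀ t : ℝ, t ≤ t0 →
      conduct G (Vlt G p t)
        = ((bdry G (Vlt G p t)).card : ℝ) / ((vol G (Vlt G p t) : ℕ) : ℝ) := by
    intro t ht
    rw [conduct]
    congr 2
    have h1 : vol G (Vlt G p t) ≤ m := hvol_le t ht
    rw [← hm]
    omega
  -- contradiction setup
  by_contra hcon
  push_neg at hcon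
  have hφ0 : 0 < φ := by
    rw [hφdef]
    apply Real.sqrt_pos.mpr
    apply div_pos (by linarith) (mul_pos (by linarith) hVτ0)
  have hkey : ∀ t : ℝ, τ ≤ t → t < t0 →
      φ * (vol G (Vlt G p t) : ℝ) < ((cutP G (Vlt G p t)).card : ℝ) := by
    intro t ht1 ht2
    have h1 := hcon t ht1 ht2
    rw [hconduct t ht2.le] at h1
    rw [← bdry_card_eq]
    rw [lt_div_iff₀ (hvolpos t ht1)] at h1
    exact_mod_cast h1
  have hφ1 : φ < 1 := by
    have h1 := hkey τ le_rfl hτt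
    have h2 : ((cutP G (Vlt G p τ)).card : ℝ) ≤ Vτr := by
      rw [hVτr]
      exact_mod_cast cutP_card_le_vol G (Vlt G p τ)
    nlinarith
  -- one growth step
  have hstep : ∀ t : ℝ, τ ≤ t → t < t0 →
      (1 + φ/2) * (vol G (Vlt G p t) : ℝ)
        ≤ (vol G (Vlt G p (t + 6*α/(φ * (vol G (Vlt G p t) : ℝ)))) : ℝ) := by
    intro t ht1 ht2
    set S : Finset V := Vlt G p t with hSdef
    set v1 : ℝ := (vol G S : ℝ) with hv1def
    have hv1pos : 0 < v1 := hvolpos t ht1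
    set g : ℝ := 6*α/(φ * v1) with hgdef
    have hg0 : 0 < g := by
      rw [hgdef]
      exact div_pos (by linarith) (mul_pos hφ0 hv1pos)
    set T : Finset V := Vlt G p (t + g) with hTdef
    have hST : S ⊆ T := hvolmono (by linarith)
    -- cut sum bound
    have hcs : ∑ x ∈ cutP G S, (p x.2 / (G.degree x.2 : ℝ) - p x.1 / (G.degree x.1 : ℝ))
        ≤ 3*α := cut_sum_le G hd S p p0 (3*α) hL hp0 (by linarith) hsum
    -- membership facts
    have hmem : ∀ x ∈ cutP G S,
        p x.1 / (G.degree x.1 : ℝ) < t ∧ t ≤ p x.2 / (G.degree x.2 : ℝ) ∧ G.Adj x.1 x.2 := by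
      intro x hx
      rw [cutP, Finset.mem_filter] at hx
      obtain ⟨-, hx1, hx2, hadj⟩ := hx
      rw [hSdef, Vlt, Finset.mem_filter] at hx1 hx2
      refine ⟨hx1.2, ?_, hadj⟩
      by_contra hc
      exact hx2 ⟨Finset.mem_univ _, by linarith⟩
    have hposdiff : ∀ x ∈ cutP G S,
        0 ≤ p x.2 / (G.degree x.2 : ℝ) - p x.1 / (G.degree x.1 : ℝ) := by
      intro x hx
      obtain ⟨h1, h2, -⟩ := hmem x hx
      linarith
    -- big and small edges
    set big : Finset (V × V) :=
      (cutP G S).filter (fun x => g ≤ p x.2 / (G.degree x.2 : ℝ) - p x.1 / (G.degree x.1 : ℝ))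
      with hbigdef
    set small : Finset (V × V) :=
      (cutP G S).filter (fun x => ¬ (g ≤ p x.2 / (G.degree x.2 : ℝ) - p x.1 / (G.degree x.1 : ℝ)))
      with hsmalldef
    have hsplit : big.card + small.card = (cutP G S).card := by
      rw [hbigdef, hsmalldef]
      exact Finset.card_filter_add_card_filter_not _
    have hbig : (big.card : ℝ) * g ≤ 3*α := by
      have h1 : big.card • g ≤ ∑ x ∈ big, (p x.2 / (G.degree x.2 : ℝ) - p x.1 / (G.degree x.1 : ℝ)) := by
        refine Finset.card_nsmul_le_sum big _ g ?_
        intro x hx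
        rw [hbigdef, Finset.mem_filter] at hx
        exact hx.2
      have h2 : ∑ x ∈ big, (p x.2 / (G.degree x.2 : ℝ) - p x.1 / (G.degree x.1 : ℝ))
          ≤ ∑ x ∈ cutP G S, (p x.2 / (G.degree x.2 : ℝ) - p x.1 / (G.degree x.1 : ℝ)) := by
        refine Finset.sum_le_sum_of_subset_of_nonneg (Finset.filter_subset _ _) ?_
        intro x hx _
        exact hposdiff x hx
      rw [nsmul_eq_mul] at h1
      linarith
    have hbig' : (big.card : ℝ) ≤ φ * v1 / 2 := by
      have hgval : 3*α = (φ * v1 / 2) * g := by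
        rw [hgdef]
        field_simp
        ring
      rw [hgval] at hbig
      exact le_of_mul_le_mul_right hbig hg0
    have hsmall : φ * v1 / 2 < (small.card : ℝ) := by
      have h1 := hkey t ht1 ht2
      rw [← hSdef, ← hv1def] at h1
      have h2 : ((big.card + small.card : ℕ) : ℝ) = ((cutP G S).card : ℝ) := by
        exact_mod_cast hsplit
      push_cast at h2
      linarith
    -- growth
    have hgrow : small.card + vol G S ≤ vol G T := by
      refine small_growth G S T hST small ?_ ?_ ?_
      · intro x hx
        rw [hsmalldef, Finset.mem_filter] at hx
        exact (hmem x hx.1).2.2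
      · intro x hx
        rw [hsmalldef, Finset.mem_filter] at hx
        have := hx.1
        rw [cutP, Finset.mem_filter] at this
        exact this.2.2.1
      · intro x hx
        rw [hsmalldef, Finset.mem_filter] at hx
        obtain ⟨hx1, hx2⟩ := hx
        obtain ⟨ha, hb, -⟩ := hmem x hx1
        rw [hTdef, Vlt, Finset.mem_filter]
        refine ⟨Finset.mem_univ _, ?_⟩
        push_neg at hx2
        linarith
    have hgrow' : (small.card : ℝ) + v1 ≤ (vol G T : ℝ) := by
      rw [hv1def]
      exact_mod_cast hgrow
    linarith
  -- parameters of the induction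
  set β : ℝ := 1 + φ/2 with hβdef
  have hβ1 : 1 < β := by rw [hβdef]; linarith
  have hβ0 : (0:ℝ) < β := by linarith
  have hβinv0 : (0:ℝ) < β⁻¹ := inv_pos.mpr hβ0
  have hφsq : φ^2 = 42 * α / ((t0 - τ) * Vτr) := by
    rw [hφdef]
    exact Real.sq_sqrt (le_of_lt (div_pos (by linarith) (mul_pos (by linarith) hVτ0)))
  set K : ℝ := 12*α*β/(φ^2 * Vτr) with hKdef
  have hK0 : 0 < K := by
    rw [hKdef]
    exact div_pos (by positivity) (mul_pos (by positivity) hVτ0)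
  have hKval : K = (2*β/7) * (t0 - τ) := by
    rw [hKdef, hφsq]
    field_simp
    ring
  have hKlt : K < t0 - τ := by
    rw [hKval]
    nlinarith [hφ1, hφ0]
  -- the induction
  have hmain : ∀ k : ℕ, ∃ t : ℝ, τ ≤ t ∧ t + K * (β⁻¹)^k ≤ τ + K ∧
      Vτr * β^k ≤ (vol G (Vlt G p t) : ℝ) := by
    intro k
    induction k with
    | zero =>
        refine ⟨τ, le_rfl, ?_, ?_⟩
        · rw [pow_zero, mul_one]
        · rw [pow_zero, mul_one, hVτr]
    | succ k ih =>
        obtain ⟨t, ht1, ht2, ht3⟩ := ih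
        have hrk0 : (0:ℝ) < (β⁻¹)^k := pow_pos hβinv0 k
        have hKrk : (0:ℝ) < K * (β⁻¹)^k := mul_pos hK0 hrk0
        have htlt : t < t0 := by linarith
        set v1 : ℝ := (vol G (Vlt G p t) : ℝ) with hv1def
        have hv1pos : 0 < v1 := hvolpos t ht1
        have hβk0 : (0:ℝ) < β^k := pow_pos hβ0 k
        have hVβ : 0 < Vτr * β^k := mul_pos hVτ0 hβk0
        set g : ℝ := 6*α/(φ * v1) with hgdef
        have hg0 : 0 < g := div_pos (by linarith) (mul_pos hφ0 hv1pos)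
        have hgstep := hstep t ht1 htlt
        rw [← hv1def, ← hgdef] at hgstep
        have htg : τ ≤ t + g := by linarith
        refine ⟨t + g, htg, ?_, ?_⟩
        · -- t + g + K (β⁻¹)^(k+1) ≤ τ + K
          have hgle : g ≤ 6*α/(φ * (Vτr * β^k)) := by
            rw [hgdef]
            refine div_le_div_of_nonneg_left (by linarith) (mul_pos hφ0 hVβ) ?_
            exact mul_le_mul_of_nonneg_left ht3 hφ0.le
          have hident : 6*α/(φ * (Vτr * β^k)) = K * (β⁻¹)^k - K * (β⁻¹)^(k+1) := by
            rw [hKdef, pow_succ]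
            have hφne : φ ≠ 0 := ne_of_gt hφ0
            have hVne : Vτr ≠ 0 := ne_of_gt hVτ0
            have hβne : β ≠ 0 := ne_of_gt hβ0
            have hβkne : (β:ℝ)^k ≠ 0 := pow_ne_zero k hβne
            have hb : (β⁻¹)^k = 1/β^k := by rw [inv_pow, one_div]
            have h1b : 1 - β⁻¹ = φ/(2*β) := by
              field_simp
              rw [hβdef]
              ring
            calc 6*α/(φ*(Vτr*β^k)) = 12*α*β/(φ^2*Vτr) * (1/β^k) * (φ/(2*β)) := by
                  field_simp
                  ring
              _ = _ := by rw [← hb, ← h1b]; ring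
          rw [hident] at hgle
          linarith
        · -- volume growth
          rw [pow_succ]
          calc Vτr * (β^k * β) = (Vτr * β^k) * β := by ring
            _ ≤ v1 * β := mul_le_mul_of_nonneg_right ht3 hβ0.le
            _ = β * v1 := by ring
            _ ≤ _ := hgstep
  -- final contradiction
  obtain ⟨k, hk⟩ := pow_unbounded_of_one_lt (m : ℝ) hβ1
  obtain ⟨t, ht1, ht2, ht3⟩ := hmain k
  have hrk0 : (0:ℝ) < (β⁻¹)^k := pow_pos hβinv0 k
  have hKrk : (0:ℝ) < K * (β⁻¹)^k := mul_pos hK0 hrk0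
  have htlt : t < t0 := by linarith
  have hvle : vol G (Vlt G p t) ≤ m := hvol_le t htlt.le
  have hvler : (vol G (Vlt G p t) : ℝ) ≤ (m : ℝ) := by exact_mod_cast hvle
  have hβk1 : (1:ℝ) * β^k ≤ Vτr * β^k :=
    mul_le_mul_of_nonneg_right hVτ1 (pow_pos hβ0 k).le
  linarith [hk, ht3, hβk1, hvler]


end
end

section
/- Let G be a finite simple graph with no isolated vertices and m ≥ 2 edges, let 0 < α ≤ 1/3 and ε ≥ 0, and let (p, r) be the state after any run of pushes starting from (p₀, r₀) with p₀ = 0, r₀ = p° ≥ 0 and ∑_v p°(v) = 1. Suppose that r(v)/d(v) ≤ ε for every vertex v, that 0 ≤ τ < t₀ with vol(V^p_{<t₀}) ≤ m, and that there exists a vertex u with p(u)/d(u) < τ. Then there exists t ∈ [τ, t₀) such that Φ(V^p_{<t}) ≤ sqrt( 12·(t₀ + ε)·α·log₂ m / (t₀ − τ) ). -/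
open scoped Classical
open Finset

noncomputable section

variable {V : Type*} [Fintype V]

/-- The full invariant maintained along a run. -/
def GoodState (G : SimpleGraph V) (α : ℝ) (p0 : V → ℝ) (s : (V → ℝ) × (V → ℝ)) : Prop :=
  (∀ v, 0 ≤ s.1 v) ∧ (∀ v, 0 ≤ s.2 v) ∧
  ((∑ v, (s.1 v + s.2 v)) = ∑ v, p0 v) ∧
  (∀ v, s.1 v = α * (p0 v - s.2 v) +
      (1 - α)/2 * (s.1 v + ∑ w ∈ G.neighborFinset v, s.1 w / (G.degree w : ℝ)))

lemma sum_ite_eq_update {f g : V → ℝ} (u : V) :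
    ∑ w, (if w = u then f w else g w) = f u + (∑ w, g w) - g u := by
  have h : ∀ w, (if w = u then f w else g w) = g w + (if w = u then f u - g u else 0) := by
    intro w
    by_cases hw : w = u <;> simp [hw]
  simp only [h, Finset.sum_add_distrib, Finset.sum_ite_eq' Finset.univ u, Finset.mem_univ,
    if_true]
  ring

lemma sum_set_ite_eq_update {T : Finset V} {f g : V → ℝ} (u : V) :
    ∑ w ∈ T, (if w = u then f w else g w)
      = (∑ w ∈ T, g w) + (if u ∈ T then f u - g u else 0) := by
  have h : ∀ w, (if w = u then f w else g w) = g w + (if w = u then f u - g u else 0) := by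
    intro w
    by_cases hw : w = u <;> simp [hw]
  simp only [h, Finset.sum_add_distrib, Finset.sum_ite_eq' T u]

lemma push_good (G : SimpleGraph V) (α : ℝ) (hα0 : 0 < α) (hα1 : α < 1)
    (hd : ∀ v : V, 0 < G.degree v) (p0 : V → ℝ) (u : V)
    (s : (V → ℝ) × (V → ℝ)) (hs : GoodState G α p0 s) :
    GoodState G α p0 (push G α u s) := by
  obtain ⟨h1, h2, h3, h4⟩ := hs
  have hdu : (0:ℝ) < (G.degree u : ℝ) := by exact_mod_cast hd u
  refine ⟨?_, ?_, ?_, ?_⟩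
  · intro v
    simp only [push]
    split
    · have := h1 u; have := h2 u; nlinarith
    · exact h1 v
  · intro v
    simp only [push]
    split
    · have := h2 u; nlinarith
    · split
      · have := h2 v; have := h2 u
        have : 0 ≤ (1 - α) * s.2 u / (2 * (G.degree u : ℝ)) := by
          apply div_nonneg (mul_nonneg (by linarith) (h2 u)) (by positivity)
        linarith [h2 v]
      · exact h2 v
  · -- mass conservation
    have hfilter : Finset.univ.filter (fun w => G.Adj u w) = G.neighborFinset u := by
      ext w; simp [SimpleGraph.mem_neighborFinset]
    have hc : (∑ w, (if G.Adj u w then (1 - α) * s.2 u / (2 * (G.degree u : ℝ)) else 0))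
        = (1 - α) * s.2 u / 2 := by
      rw [Finset.sum_ite, Finset.sum_const_zero, add_zero, Finset.sum_const, hfilter]
      simp only [SimpleGraph.card_neighborFinset_eq_degree, nsmul_eq_mul]
      field_simp
    have e1 : ∑ v, (push G α u s).1 v = (s.1 u + α * s.2 u) + (∑ v, s.1 v) - s.1 u := by
      simpa [push] using
        sum_ite_eq_update (f := fun _ => s.1 u + α * s.2 u) (g := s.1) (u := u)
    have e2 : ∑ v, (push G α u s).2 v
        = ((1 - α) * s.2 u / 2) + (∑ v, s.2 v + (1 - α) * s.2 u / 2) - s.2 u := by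
      have hg : ∀ w, (if G.Adj u w then s.2 w + (1 - α) * s.2 u / (2 * (G.degree u : ℝ))
            else s.2 w)
          = s.2 w + (if G.Adj u w then (1 - α) * s.2 u / (2 * (G.degree u : ℝ)) else 0) := by
        intro w; by_cases h : G.Adj u w <;> simp [h]
      have := sum_ite_eq_update (f := fun _ => (1 - α) * s.2 u / 2)
        (g := fun w => if G.Adj u w then s.2 w + (1 - α) * s.2 u / (2 * (G.degree u : ℝ))
            else s.2 w) (u := u)
      simp only [push]
      rw [this]
      simp only [hg, Finset.sum_add_distrib, hc, G.irrefl, if_false]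
    rw [Finset.sum_add_distrib, e1, e2, ← h3, Finset.sum_add_distrib]
    ring
  · -- pagerank invariant
    intro v
    have hpself : (push G α u s).1 u = s.1 u + α * s.2 u := by simp [push]
    have hpne : ∀ w, w ≠ u → (push G α u s).1 w = s.1 w := by
      intro w hw; simp [push, hw]
    have hrself : (push G α u s).2 u = (1 - α) * s.2 u / 2 := by simp [push]
    have hradj : ∀ w, w ≠ u → G.Adj u w →
        (push G α u s).2 w = s.2 w + (1 - α) * s.2 u / (2 * (G.degree u : ℝ)) := by
      intro w hw ha; simp [push, hw, ha]
    have hrnone : ∀ w, w ≠ u → ¬ G.Adj u w → (push G α u s).2 w = s.2 w := by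
      intro w hw ha; simp [push, hw, ha]
    have hnbr :
        (∑ w ∈ G.neighborFinset v, (push G α u s).1 w / (G.degree w : ℝ))
        = (∑ w ∈ G.neighborFinset v, s.1 w / (G.degree w : ℝ))
          + (if u ∈ G.neighborFinset v then α * s.2 u / (G.degree u : ℝ) else 0) := by
      have hpt : ∀ w, (push G α u s).1 w / (G.degree w : ℝ)
          = (if w = u then (s.1 u + α * s.2 u) / (G.degree w : ℝ)
             else s.1 w / (G.degree w : ℝ)) := by
        intro w; by_cases h : w = u
        · subst h; rw [hpself, if_pos rfl]
        · rw [hpne w h, if_neg h]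
      rw [Finset.sum_congr rfl (fun w _ => hpt w),
        sum_set_ite_eq_update (T := G.neighborFinset v)
          (f := fun w => (s.1 u + α * s.2 u) / (G.degree w : ℝ))
          (g := fun w => s.1 w / (G.degree w : ℝ)) u]
      congr 1
      split <;> ring
    rw [hnbr]
    by_cases hvu : v = u
    · subst hvu
      have hmem : v ∉ G.neighborFinset v := by simp
      rw [hpself, hrself, if_neg hmem, add_zero]
      linear_combination h4 v
    · rw [hpne v hvu]
      by_cases hadj : G.Adj u v
      · have hmem : u ∈ G.neighborFinset v := by
          simp [SimpleGraph.mem_neighborFinset, G.adj_symm hadj]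
        rw [hradj v hvu hadj, if_pos hmem]
        linear_combination h4 v
      · have hmem : u ∉ G.neighborFinset v := by
          simp only [SimpleGraph.mem_neighborFinset]
          exact fun h => hadj (G.adj_symm h)
        rw [hrnone v hvu hadj, if_neg hmem, add_zero]
        exact h4 v

lemma run_good (G : SimpleGraph V) (α : ℝ) (hα0 : 0 < α) (hα1 : α < 1)
    (hd : ∀ v : V, 0 < G.degree v) (p0 : V → ℝ) (us : List V)
    (init : (V → ℝ) × (V → ℝ)) (hinit : GoodState G α p0 init) :
    GoodState G α p0 (runState G α init us) := by
  induction us generalizing init with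
  | nil => exact hinit
  | cons u us ih =>
    exact ih _ (push_good G α hα0 hα1 hd p0 u init hinit)

lemma init_good (G : SimpleGraph V) (α : ℝ) (p0 : V → ℝ) (hp0 : ∀ v, 0 ≤ p0 v) :
    GoodState G α p0 ((fun _ => 0), p0) := by
  refine ⟨fun v => le_refl 0, hp0, by simp, fun v => by simp⟩

lemma pair_sum_fst (G : SimpleGraph V) (A B : Finset V) (f : V → ℝ) :
    ∑ q ∈ Finset.univ.filter (fun q : V × V => G.Adj q.1 q.2 ∧ q.1 ∈ A ∧ q.2 ∈ B), f q.1
      = ∑ v ∈ A, ((B ∩ G.neighborFinset v).card : ℝ) * f v := by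
  rw [Finset.sum_filter, ← Finset.univ_product_univ, Finset.sum_product]
  have hinner : ∀ v : V, (∑ w, if G.Adj v w ∧ v ∈ A ∧ w ∈ B then f v else 0)
      = if v ∈ A then ((B ∩ G.neighborFinset v).card : ℝ) * f v else 0 := by
    intro v
    by_cases hv : v ∈ A
    · rw [if_pos hv]
      have : ∀ w, (if G.Adj v w ∧ v ∈ A ∧ w ∈ B then f v else 0)
          = (if w ∈ B ∩ G.neighborFinset v then f v else 0) := by
        intro w
        by_cases h : G.Adj v w ∧ w ∈ B
        · rw [if_pos ⟨h.1, hv, h.2⟩, if_pos (by simp [Finset.mem_inter,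
            SimpleGraph.mem_neighborFinset, h.1, h.2])]
        · rw [if_neg (fun hc => h ⟨hc.1, hc.2.2⟩), if_neg (fun hc => by
            simp only [Finset.mem_inter, SimpleGraph.mem_neighborFinset] at hc
            exact h ⟨hc.2, hc.1⟩)]
      rw [Finset.sum_congr rfl (fun w _ => this w), Finset.sum_ite_mem, Finset.univ_inter,
        Finset.sum_const, nsmul_eq_mul]
    · rw [if_neg hv]
      apply Finset.sum_eq_zero
      intro w _
      rw [if_neg (fun hc => hv hc.2.1)]
  rw [Finset.sum_congr rfl (fun v _ => hinner v)]
  rw [← Finset.sum_filter, Finset.filter_mem_eq_inter, Finset.univ_inter]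

lemma pair_sum_snd (G : SimpleGraph V) (A B : Finset V) (f : V → ℝ) :
    ∑ q ∈ Finset.univ.filter (fun q : V × V => G.Adj q.1 q.2 ∧ q.1 ∈ A ∧ q.2 ∈ B), f q.2
      = ∑ w ∈ B, ((A ∩ G.neighborFinset w).card : ℝ) * f w := by
  rw [Finset.sum_filter, ← Finset.univ_product_univ, Finset.sum_product, Finset.sum_comm]
  have hinner : ∀ w : V, (∑ v, if G.Adj v w ∧ v ∈ A ∧ w ∈ B then f w else 0)
      = if w ∈ B then ((A ∩ G.neighborFinset w).card : ℝ) * f w else 0 := by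
    intro w
    by_cases hw : w ∈ B
    · rw [if_pos hw]
      have : ∀ v, (if G.Adj v w ∧ v ∈ A ∧ w ∈ B then f w else 0)
          = (if v ∈ A ∩ G.neighborFinset w then f w else 0) := by
        intro v
        by_cases h : G.Adj v w ∧ v ∈ A
        · rw [if_pos ⟨h.1, h.2, hw⟩, if_pos (by simp [Finset.mem_inter,
            SimpleGraph.mem_neighborFinset, G.adj_symm h.1, h.2])]
        · rw [if_neg (fun hc => h ⟨hc.1, hc.2.1⟩), if_neg (fun hc => by
            simp only [Finset.mem_inter, SimpleGraph.mem_neighborFinset] at hc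
            exact h ⟨G.adj_symm hc.2, hc.1⟩)]
      rw [Finset.sum_congr rfl (fun v _ => this v), Finset.sum_ite_mem, Finset.univ_inter,
        Finset.sum_const, nsmul_eq_mul]
    · rw [if_neg hw]
      apply Finset.sum_eq_zero
      intro v _
      rw [if_neg (fun hc => hw hc.2.2)]
  rw [Finset.sum_congr rfl (fun w _ => hinner w)]
  rw [← Finset.sum_filter, Finset.filter_mem_eq_inter, Finset.univ_inter]

lemma double_sum_swap (G : SimpleGraph V) (H : Finset V) (f : V → ℝ) :
    ∑ v ∈ H, ∑ w ∈ G.neighborFinset v, f w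
      = ∑ w, ((H ∩ G.neighborFinset w).card : ℝ) * f w := by
  have h1 : ∀ v : V, (∑ w ∈ G.neighborFinset v, f w) = ∑ w, if w ∈ G.neighborFinset v then f w else 0 := by
    intro v
    rw [Finset.sum_ite_mem, Finset.univ_inter]
  rw [Finset.sum_congr rfl (fun v _ => h1 v), Finset.sum_comm]
  apply Finset.sum_congr rfl
  intro w _
  have h2 : ∀ v, (if w ∈ G.neighborFinset v then f w else 0)
      = (if v ∈ H ∩ G.neighborFinset w then f w else 0) ∨ True := fun v => Or.inr trivial
  have h3 : ∀ v ∈ H, (if w ∈ G.neighborFinset v then f w else 0)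
      = (if v ∈ G.neighborFinset w then f w else 0) := by
    intro v _
    simp only [SimpleGraph.mem_neighborFinset]
    rw [G.adj_comm]
  rw [Finset.sum_congr rfl h3, Finset.sum_ite_mem, Finset.sum_const, nsmul_eq_mul,
    Finset.inter_comm]

lemma key_identity (G : SimpleGraph V) (α : ℝ) (p0 p r : V → ℝ)
    (hinv : ∀ v, p v = α * (p0 v - r v) +
      (1 - α)/2 * (p v + ∑ w ∈ G.neighborFinset v, p w / (G.degree w : ℝ)))
    (H : Finset V) :
    α * ((∑ v ∈ H, p0 v) - (∑ v ∈ H, r v) - ∑ v ∈ H, p v)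
      = (1 - α)/2 * ((∑ v ∈ H, p v)
          - ∑ w, ((H ∩ G.neighborFinset w).card : ℝ) * (p w / (G.degree w : ℝ))) := by
  have hs : ∑ v ∈ H, p v = ∑ v ∈ H, (α * (p0 v - r v) +
      (1 - α)/2 * (p v + ∑ w ∈ G.neighborFinset v, p w / (G.degree w : ℝ))) :=
    Finset.sum_congr rfl (fun v _ => hinv v)
  rw [Finset.sum_add_distrib] at hs
  rw [← Finset.mul_sum, ← Finset.mul_sum, Finset.sum_sub_distrib, Finset.sum_add_distrib] at hs
  rw [double_sum_swap G H (fun w => p w / (G.degree w : ℝ))] at hs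
  linear_combination (-1 : ℝ) * hs

/-- Ordered pairs realizing the boundary of `S`: `q.1 ∉ S`, `q.2 ∈ S`, adjacent. -/
def cutpairs (G : SimpleGraph V) (S : Finset V) : Finset (V × V) :=
  Finset.univ.filter fun q => G.Adj q.1 q.2 ∧ q.1 ∉ S ∧ q.2 ∈ S

lemma vol_mono (G : SimpleGraph V) {S T : Finset V} (h : S ⊆ T) : vol G S ≤ vol G T :=
  Finset.sum_le_sum_of_subset h

lemma Vlt_mono (G : SimpleGraph V) (p : V → ℝ) {a b : ℝ} (h : a ≤ b) :
    Vlt G p a ⊆ Vlt G p b := by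
  intro v hv
  simp only [Vlt, Finset.mem_filter, Finset.mem_univ, true_and] at hv ⊢
  linarith

lemma star (G : SimpleGraph V) (hd : ∀ v : V, 0 < G.degree v)
    (α : ℝ) (hα0 : 0 < α) (hα : α ≤ 1/3)
    (ε : ℝ) (hε : 0 ≤ ε) (p0 p r : V → ℝ)
    (hp0 : ∀ v, 0 ≤ p0 v)
    (hpnn : ∀ v, 0 ≤ p v) (hrnn : ∀ v, 0 ≤ r v)
    (hmass : ∑ v, (p v + r v) = ∑ v, p0 v)
    (hinv : ∀ v, p v = α * (p0 v - r v) +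
      (1 - α)/2 * (p v + ∑ w ∈ G.neighborFinset v, p w / (G.degree w : ℝ)))
    (hrε : ∀ v : V, r v / (G.degree v : ℝ) ≤ ε)
    (t0 y : ℝ) (hy : y ≤ t0) :
    ∑ q ∈ cutpairs G (Vlt G p y),
        (p q.1 / (G.degree q.1 : ℝ) - p q.2 / (G.degree q.2 : ℝ))
      ≤ 3 * α * (t0 + ε) * (vol G (Vlt G p y) : ℝ) := by
  classical
  set S := Vlt G p y with hS
  set H := Finset.univ \ S with hHdef
  have hdR : ∀ v : V, (0:ℝ) < (G.degree v : ℝ) := fun v => by exact_mod_cast hd v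
  have hmemS : ∀ v : V, v ∈ S ↔ p v / (G.degree v : ℝ) < y := by
    intro v; simp [hS, Vlt]
  have hmemH : ∀ v : V, v ∈ H ↔ y ≤ p v / (G.degree v : ℝ) := by
    intro v; simp only [hHdef, Finset.mem_sdiff, Finset.mem_univ, true_and, hmemS, not_lt]
  -- rewrite cutpairs as an (H, S) pair-filter
  have hcut : cutpairs G S
      = Finset.univ.filter (fun q : V × V => G.Adj q.1 q.2 ∧ q.1 ∈ H ∧ q.2 ∈ S) := by
    apply Finset.filter_congr
    intro q _
    simp only [hHdef, Finset.mem_sdiff, Finset.mem_univ, true_and]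
  set dens : V → ℝ := fun v => p v / (G.degree v : ℝ) with hdens
  -- decompose the cut sum
  have hDsum : ∑ q ∈ cutpairs G S, (dens q.1 - dens q.2)
      = (∑ v ∈ H, ((S ∩ G.neighborFinset v).card : ℝ) * dens v)
        - ∑ w ∈ S, ((H ∩ G.neighborFinset w).card : ℝ) * dens w := by
    rw [hcut, Finset.sum_sub_distrib, pair_sum_fst G H S dens, pair_sum_snd G H S dens]
  -- the bracket from the key identity equals the cut sum
  have hbracket : (∑ v ∈ H, p v)
      - (∑ w, ((H ∩ G.neighborFinset w).card : ℝ) * (p w / (G.degree w : ℝ)))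
      = ∑ q ∈ cutpairs G S, (dens q.1 - dens q.2) := by
    have hsplit : ∀ v : V, ((G.degree v : ℝ))
        = ((S ∩ G.neighborFinset v).card : ℝ) + ((H ∩ G.neighborFinset v).card : ℝ) := by
      intro v
      have hdisj : Disjoint (S ∩ G.neighborFinset v) (H ∩ G.neighborFinset v) := by
        apply Finset.disjoint_left.mpr
        intro a ha hb
        simp only [Finset.mem_inter] at ha hb
        have := (hmemH a).mp hb.1
        have := (hmemS a).mp ha.1
        linarith
      have hun : (S ∩ G.neighborFinset v) ∪ (H ∩ G.neighborFinset v) = G.neighborFinset v := by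
        ext a
        simp only [Finset.mem_union, Finset.mem_inter, hHdef, Finset.mem_sdiff,
          Finset.mem_univ, true_and]
        tauto
      have := Finset.card_union_of_disjoint hdisj
      rw [hun] at this
      rw [← G.card_neighborFinset_eq_degree]
      exact_mod_cast this
    have hpv : ∀ v : V, p v = (G.degree v : ℝ) * dens v := by
      intro v
      simp only [hdens]; exact (mul_div_cancel₀ (p v) (hdR v).ne').symm
    have h1 : ∑ v ∈ H, p v
        = ∑ v ∈ H, (((S ∩ G.neighborFinset v).card : ℝ) * dens v
            + ((H ∩ G.neighborFinset v).card : ℝ) * dens v) := by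
      apply Finset.sum_congr rfl
      intro v _
      rw [hpv v, hsplit v]; ring
    have h2 : (∑ w, ((H ∩ G.neighborFinset w).card : ℝ) * (p w / (G.degree w : ℝ)))
        = (∑ w ∈ H, ((H ∩ G.neighborFinset w).card : ℝ) * dens w)
          + ∑ w ∈ S, ((H ∩ G.neighborFinset w).card : ℝ) * dens w := by
      rw [← Finset.sum_sdiff (Finset.subset_univ S)]
    rw [h1, h2, hDsum, Finset.sum_add_distrib]
    ring
  have hkey := key_identity G α p0 p r hinv H
  rw [hbracket] at hkey
  -- nonnegativity of the cut sum
  have hDnn : 0 ≤ ∑ q ∈ cutpairs G S, (dens q.1 - dens q.2) := by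
    apply Finset.sum_nonneg
    intro q hq
    simp only [cutpairs, Finset.mem_filter, Finset.mem_univ, true_and] at hq
    have h1 : y ≤ dens q.1 := by
      have := hq.2.1
      simp only [hmemS, not_lt] at this
      exact this
    have h2 : dens q.2 < y := (hmemS q.2).mp hq.2.2
    linarith
  -- X ≤ (t0 + ε) * vol S
  have hXle : (∑ v ∈ H, p0 v) - (∑ v ∈ H, r v) - (∑ v ∈ H, p v)
      ≤ (t0 + ε) * (vol G S : ℝ) := by
    have h1 : (∑ v ∈ H, p0 v) ≤ ∑ v, p0 v :=
      Finset.sum_le_sum_of_subset_of_nonneg (Finset.subset_univ H) (fun v _ _ => hp0 v)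
    have h2 : (∑ v, (p v + r v)) - (∑ v ∈ H, (p v + r v)) = ∑ v ∈ S, (p v + r v) := by
      rw [← Finset.sum_sdiff (Finset.subset_univ S), ← hHdef]; ring
    have h3 : ∑ v ∈ S, (p v + r v) ≤ (t0 + ε) * (vol G S : ℝ) := by
      have hvol : (vol G S : ℝ) = ∑ v ∈ S, (G.degree v : ℝ) := by
        simp [vol]
      rw [hvol, Finset.mul_sum]
      apply Finset.sum_le_sum
      intro v hv
      have hdv := hdR v
      have hpb : p v ≤ t0 * (G.degree v : ℝ) := by
        have := (hmemS v).mp hv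
        rw [div_lt_iff₀ hdv] at this
        nlinarith
      have hrb : r v ≤ ε * (G.degree v : ℝ) := by
        have := hrε v
        rw [div_le_iff₀ hdv] at this
        linarith
      nlinarith
    have h4 : (∑ v ∈ H, (p v + r v)) = (∑ v ∈ H, p v) + ∑ v ∈ H, r v :=
      Finset.sum_add_distrib
    linarith [hmass]
  -- conclude
  have hXnn : 0 ≤ (∑ v ∈ H, p0 v) - (∑ v ∈ H, r v) - (∑ v ∈ H, p v) := by
    by_contra hneg
    push_neg at hneg
    have : α * ((∑ v ∈ H, p0 v) - (∑ v ∈ H, r v) - (∑ v ∈ H, p v)) < 0 :=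
      mul_neg_of_pos_of_neg hα0 hneg
    rw [hkey] at this
    have : (0:ℝ) < (1 - α)/2 := by linarith
    nlinarith
  set X := (∑ v ∈ H, p0 v) - (∑ v ∈ H, r v) - (∑ v ∈ H, p v) with hX
  set Ds := ∑ q ∈ cutpairs G S, (dens q.1 - dens q.2) with hDs
  have h1α : (0:ℝ) < 1 - α := by linarith
  -- from hkey : α * X = (1-α)/2 * Ds
  have hXY : X ≤ (t0 + ε) * (vol G S : ℝ) := hXle
  nlinarith [mul_le_mul_of_nonneg_left hXY (le_of_lt hα0), hkey, hDnn, hXnn,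
    mul_nonneg (le_of_lt hα0) hXnn]

lemma card_bdry_eq (G : SimpleGraph V) (S : Finset V) :
    (bdry G S).card = (cutpairs G S).card := by
  classical
  symm
  apply Finset.card_bij (fun (q : V × V) _ => s(q.1, q.2))
  · intro q hq
    simp only [cutpairs, Finset.mem_filter, Finset.mem_univ, true_and] at hq
    obtain ⟨hadj, h1, h2⟩ := hq
    simp only [bdry, Finset.mem_filter, SimpleGraph.mem_edgeFinset, SimpleGraph.mem_edgeSet]
    exact ⟨hadj, q.2, q.1, h2, h1, Sym2.eq_swap⟩
  · intro a ha b hb hab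
    simp only [cutpairs, Finset.mem_filter, Finset.mem_univ, true_and] at ha hb
    rw [Sym2.eq_iff] at hab
    rcases hab with ⟨h1, h2⟩ | ⟨h1, h2⟩
    · exact Prod.ext h1 h2
    · exact absurd hb.2.2 (h1 ▸ ha.2.1)
  · intro e he
    simp only [bdry, Finset.mem_filter, SimpleGraph.mem_edgeFinset] at he
    obtain ⟨hE, u, v, hu, hv, rfl⟩ := he
    rw [SimpleGraph.mem_edgeSet] at hE
    refine ⟨(v, u), ?_, Sym2.eq_swap⟩
    simp only [cutpairs, Finset.mem_filter, Finset.mem_univ, true_and]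
    exact ⟨G.adj_symm hE, hv, hu⟩

lemma card_pairs_snd (G : SimpleGraph V) (B : Finset V) :
    ((Finset.univ.filter (fun q : V × V => G.Adj q.1 q.2 ∧ q.2 ∈ B)).card : ℝ)
      = (vol G B : ℝ) := by
  have h := pair_sum_snd G Finset.univ B (fun _ => (1:ℝ))
  have hfe : (Finset.univ.filter (fun q : V × V => G.Adj q.1 q.2 ∧ q.1 ∈ Finset.univ ∧ q.2 ∈ B))
      = Finset.univ.filter (fun q : V × V => G.Adj q.1 q.2 ∧ q.2 ∈ B) := by
    apply Finset.filter_congr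
    intro q _
    simp
  rw [hfe] at h
  rw [Finset.sum_const, nsmul_eq_mul, mul_one] at h
  rw [h]
  rw [vol, Nat.cast_sum]
  apply Finset.sum_congr rfl
  intro w _
  rw [Finset.univ_inter, mul_one, G.card_neighborFinset_eq_degree]

/-- All adjacent ordered pairs. -/
def adjPairs (G : SimpleGraph V) : Finset (V × V) :=
  Finset.univ.filter fun q => G.Adj q.1 q.2

lemma cutpairs_eq_filter (G : SimpleGraph V) (p : V → ℝ) (y : ℝ) :
    cutpairs G (Vlt G p y) = (adjPairs G).filter
      (fun q => p q.2 / (G.degree q.2 : ℝ) < y ∧ y ≤ p q.1 / (G.degree q.1 : ℝ)) := by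
  rw [adjPairs, Finset.filter_filter]
  apply Finset.filter_congr
  intro q _
  simp only [cutpairs, Vlt, Finset.mem_filter, Finset.mem_univ, true_and, not_lt]
  tauto

open MeasureTheory in
lemma indicator_ii (a b c s s' : ℝ) :
    IntervalIntegrable ((Set.Ioc a b).indicator (fun _ => c)) volume s s' := by
  apply MeasureTheory.Integrable.intervalIntegrable
  rw [MeasureTheory.integrable_indicator_iff measurableSet_Ioc]
  exact (integrableOn_const_iff).mpr (Or.inr measure_Ioc_lt_top)

open MeasureTheory in
lemma integral_indicator_Ioc (a b s s' : ℝ) (h : s ≤ s') :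
    ∫ y in s..s', (Set.Ioc a b).indicator (fun _ => (1:ℝ)) y
      = max (min b s' - max a s) 0 := by
  rw [intervalIntegral.integral_of_le h,
    MeasureTheory.integral_indicator measurableSet_Ioc,
    MeasureTheory.Measure.restrict_restrict measurableSet_Ioc,
    MeasureTheory.setIntegral_const, Set.Ioc_inter_Ioc, Real.volume_real_Ioc,
    smul_eq_mul, mul_one]

open MeasureTheory in
lemma integral_indicator_Ioc_const (a b c s s' : ℝ) (h : s ≤ s') :
    ∫ y in s..s', (Set.Ioc a b).indicator (fun _ => c) y
      = c * max (min b s' - max a s) 0 := by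
  have hpt : ∀ y, (Set.Ioc a b).indicator (fun _ => c) y
      = c * (Set.Ioc a b).indicator (fun _ => (1:ℝ)) y := by
    intro y
    simp only [Set.indicator_apply]
    split <;> ring
  simp only [hpt]
  rw [intervalIntegral.integral_const_mul, integral_indicator_Ioc a b s s' h]

set_option maxHeartbeats 1000000 in
open MeasureTheory in
lemma band (G : SimpleGraph V) (p : V → ℝ) (φ c3 : ℝ) (τ t0 : ℝ)
    (hφ : 0 ≤ φ) (hc3 : 0 ≤ c3)
    (hC : ∀ x, τ ≤ x → x < t0 →
      φ * (vol G (Vlt G p x) : ℝ) < ((cutpairs G (Vlt G p x)).card : ℝ))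
    (hstar : ∀ y, y ≤ t0 →
      (∑ q ∈ cutpairs G (Vlt G p y),
        (p q.1 / (G.degree q.1 : ℝ) - p q.2 / (G.degree q.2 : ℝ)))
        ≤ c3 * (vol G (Vlt G p y) : ℝ))
    (s s' : ℝ) (hτs : τ ≤ s) (hss : s < s') (hs't : s' ≤ t0) :
    φ^2 * ((vol G (Vlt G p s) : ℝ))^2 * (s' - s)
      < c3 * ((vol G (Vlt G p s') : ℝ))^2 := by
  classical
  set dens : V → ℝ := fun v => p v / (G.degree v : ℝ) with hdens
  set W : ℝ := (vol G (Vlt G p s) : ℝ) with hW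
  set W' : ℝ := (vol G (Vlt G p s') : ℝ) with hW'
  set P : Finset (V × V) := adjPairs G with hP
  set ind : V × V → ℝ → ℝ :=
    fun q => (Set.Ioc (dens q.2) (dens q.1)).indicator (fun _ => (1:ℝ)) with hind
  set ℓ : V × V → ℝ := fun q => max (min (dens q.1) s' - max (dens q.2) s) 0 with hℓ
  set gap : V × V → ℝ := fun q => dens q.1 - dens q.2 with hgap
  have hss' : s ≤ s' := le_of_lt hss
  have hWnn : 0 ≤ W := by rw [hW]; positivity
  have hW'nn : 0 ≤ W' := by rw [hW']; positivity
  set c₀ : ℕ := ⌊φ * W⌋₊ + 1 with hc₀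
  -- counting: the indicator sum is the cut cardinality
  have hFcount : ∀ y : ℝ, (∑ q ∈ P, ind q y) = ((cutpairs G (Vlt G p y)).card : ℝ) := by
    intro y
    have hpt : ∀ q : V × V, ind q y
        = if dens q.2 < y ∧ y ≤ dens q.1 then (1:ℝ) else 0 := by
      intro q
      simp [hind, Set.indicator_apply, Set.mem_Ioc]
    rw [Finset.sum_congr rfl (fun q _ => hpt q), Finset.sum_boole, cutpairs_eq_filter G p y]
  have hDcount : ∀ y : ℝ, (∑ q ∈ P, gap q * ind q y)
      = ∑ q ∈ cutpairs G (Vlt G p y), (dens q.1 - dens q.2) := by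
    intro y
    have hpt : ∀ q : V × V, gap q * ind q y
        = if dens q.2 < y ∧ y ≤ dens q.1 then dens q.1 - dens q.2 else 0 := by
      intro q
      simp only [hind, Set.indicator_apply, Set.mem_Ioc, hgap]
      split <;> ring
    rw [Finset.sum_congr rfl (fun q _ => hpt q), ← Finset.sum_filter, cutpairs_eq_filter G p y]
  -- integrability
  have hii : ∀ q ∈ P, IntervalIntegrable (fun y => ind q y) volume s s' := by
    intro q _
    exact indicator_ii _ _ _ s s'
  have hiiF : IntervalIntegrable (fun y => ∑ q ∈ P, ind q y) volume s s' := by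
    have h2 : (fun y => ∑ q ∈ P, ind q y) = ∑ q ∈ P, ind q := by
      ext y; simp
    rw [h2]
    exact IntervalIntegrable.sum P hii
  have hiiD : ∀ q ∈ P, IntervalIntegrable (fun y => gap q * ind q y) volume s s' := by
    intro q _
    exact (indicator_ii _ _ _ s s').const_mul _
  have hiiDs : IntervalIntegrable (fun y => ∑ q ∈ P, gap q * ind q y) volume s s' := by
    have h2 : (fun y => ∑ q ∈ P, gap q * ind q y) = ∑ q ∈ P, (fun y => gap q * ind q y) := by
      ext y; simp
    rw [h2]
    exact IntervalIntegrable.sum P hiiD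
  -- pointwise lower bound for F on [s, s')
  have hF_lb : ∀ x, s ≤ x → x < s' → (c₀ : ℝ) ≤ ∑ q ∈ P, ind q x := by
    intro x hsx hxs'
    rw [hFcount x]
    have hx1 : τ ≤ x := le_trans hτs hsx
    have hx2 : x < t0 := lt_of_lt_of_le hxs' hs't
    have h1 := hC x hx1 hx2
    have h2 : W ≤ (vol G (Vlt G p x) : ℝ) := by
      rw [hW]
      exact_mod_cast vol_mono G (Vlt_mono G p hsx)
    have h3 : φ * W < ((cutpairs G (Vlt G p x)).card : ℝ) := by
      calc φ * W ≤ φ * (vol G (Vlt G p x) : ℝ) := by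
            apply mul_le_mul_of_nonneg_left h2 hφ
        _ < _ := h1
    have h4 : ⌊φ * W⌋₊ < (cutpairs G (Vlt G p x)).card := by
      rw [Nat.floor_lt (by positivity)]
      exact h3
    have h5 : c₀ ≤ (cutpairs G (Vlt G p x)).card := h4
    exact_mod_cast h5
  -- integral lower bound
  have hIlb : (c₀ : ℝ) * (s' - s) ≤ ∫ y in s..s', (∑ q ∈ P, ind q y) := by
    have hconst : IntervalIntegrable (fun _ : ℝ => (c₀ : ℝ)) volume s s' :=
      intervalIntegrable_const
    have hae : (fun _ : ℝ => (c₀ : ℝ)) ≤ᵐ[volume.restrict (Set.Icc s s')]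
        (fun y => ∑ q ∈ P, ind q y) := by
      have hne : ∀ᵐ (y : ℝ) ∂volume, y ≠ s' := by
        rw [MeasureTheory.ae_iff]
        have : {y : ℝ | ¬ y ≠ s'} = {s'} := by
          ext y; simp
        rw [this]
        exact Real.volume_singleton
      filter_upwards [MeasureTheory.ae_restrict_mem measurableSet_Icc,
        MeasureTheory.ae_restrict_of_ae hne] with y hy hne'
      rcases hy with ⟨hy1, hy2⟩
      exact hF_lb y hy1 (lt_of_le_of_ne hy2 hne')
    have := intervalIntegral.integral_mono_ae_restrict hss' hconst hiiF hae
    rwa [intervalIntegral.integral_const, smul_eq_mul, mul_comm] at this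
  -- compute the integrals
  have hIntF : (∫ y in s..s', (∑ q ∈ P, ind q y)) = ∑ q ∈ P, ℓ q := by
    rw [intervalIntegral.integral_finset_sum hii]
    apply Finset.sum_congr rfl
    intro q _
    exact integral_indicator_Ioc _ _ _ _ hss'
  have hIntD : (∫ y in s..s', (∑ q ∈ P, gap q * ind q y)) = ∑ q ∈ P, gap q * ℓ q := by
    rw [intervalIntegral.integral_finset_sum hiiD]
    apply Finset.sum_congr rfl
    intro q _
    have : ∀ y, gap q * ind q y = (Set.Ioc (dens q.2) (dens q.1)).indicator
        (fun _ => gap q) y := by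
      intro y
      simp only [hind, Set.indicator_apply]
      split <;> ring
    simp only [this]
    exact integral_indicator_Ioc_const _ _ _ _ _ hss'
  -- integral upper bound for D
  have hIub : (∫ y in s..s', (∑ q ∈ P, gap q * ind q y)) ≤ c3 * W' * (s' - s) := by
    have hconst : IntervalIntegrable (fun _ : ℝ => c3 * W') volume s s' :=
      intervalIntegrable_const
    have hmono : ∀ x ∈ Set.Icc s s', (∑ q ∈ P, gap q * ind q x) ≤ c3 * W' := by
      intro x hx
      rw [hDcount x]
      have h1 := hstar x (le_trans hx.2 hs't)
      have h2 : (vol G (Vlt G p x) : ℝ) ≤ W' := by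
        rw [hW']
        exact_mod_cast vol_mono G (Vlt_mono G p hx.2)
      calc (∑ q ∈ cutpairs G (Vlt G p x), (dens q.1 - dens q.2))
          ≤ c3 * (vol G (Vlt G p x) : ℝ) := h1
        _ ≤ c3 * W' := mul_le_mul_of_nonneg_left h2 hc3
    have := intervalIntegral.integral_mono_on hss' hiiDs hconst hmono
    rwa [intervalIntegral.integral_const, smul_eq_mul, mul_comm (s' - s)] at this
  -- restrict the ℓ-sum to pairs with second density below s'
  set P' : Finset (V × V) := P.filter (fun q => dens q.2 < s') with hP'
  have hℓ_zero : ∀ q ∈ P, ¬ (dens q.2 < s') → ℓ q = 0 := by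
    intro q _ h
    push_neg at h
    rw [hℓ]
    simp only
    apply max_eq_right
    have h1 : min (dens q.1) s' ≤ s' := min_le_right _ _
    have h2 : s' ≤ max (dens q.2) s := le_trans h (le_max_left _ _)
    linarith
  have hsum_eq : ∑ q ∈ P, ℓ q = ∑ q ∈ P', ℓ q := by
    symm
    apply Finset.sum_filter_of_ne
    intro q hq hne
    by_contra hcon
    exact hne (hℓ_zero q hq hcon)
  -- |P'| = W'
  have hcardP' : (P'.card : ℝ) = W' := by
    have : P' = Finset.univ.filter (fun q : V × V => G.Adj q.1 q.2 ∧ q.2 ∈ Vlt G p s') := by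
      rw [hP', hP, adjPairs, Finset.filter_filter]
      apply Finset.filter_congr
      intro q _
      simp only [Vlt, Finset.mem_filter, Finset.mem_univ, true_and, hdens]
    rw [this, card_pairs_snd G (Vlt G p s'), hW']
  -- basic properties of ℓ and gap
  have hℓnn : ∀ q, 0 ≤ ℓ q := fun q => le_max_right _ _
  have hℓ_le_gap : ∀ q, ℓ q ≤ max (gap q) 0 := by
    intro q
    rw [hℓ, hgap]
    simp only
    apply max_le_max _ (le_refl 0)
    have h1 : min (dens q.1) s' ≤ dens q.1 := min_le_left _ _
    have h2 : dens q.2 ≤ max (dens q.2) s := le_max_left _ _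
    linarith
  have hsq_le : ∀ q, ℓ q ^ 2 ≤ gap q * ℓ q := by
    intro q
    rcases eq_or_lt_of_le (hℓnn q) with h | h
    · rw [← h]; norm_num
    · have h2 : ℓ q ≤ gap q := by
        have := hℓ_le_gap q
        rcases le_or_gt (gap q) 0 with hg | hg
        · exfalso
          rw [max_eq_right hg] at this
          linarith
        · rwa [max_eq_left (le_of_lt hg)] at this
      nlinarith
  have hgapℓnn : ∀ q, 0 ≤ gap q * ℓ q := by
    intro q
    have := hsq_le q
    nlinarith [hℓnn q, sq_nonneg (ℓ q)]
  -- Cauchy–Schwarz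
  have hCS : (∑ q ∈ P', ℓ q)^2 ≤ (P'.card : ℝ) * ∑ q ∈ P', (ℓ q)^2 := by
    exact_mod_cast sq_sum_le_card_mul_sum_sq (s := P') (f := ℓ)
  have hsumsq : (∑ q ∈ P', (ℓ q)^2) ≤ ∑ q ∈ P, gap q * ℓ q := by
    calc (∑ q ∈ P', (ℓ q)^2) ≤ ∑ q ∈ P', gap q * ℓ q :=
          Finset.sum_le_sum (fun q _ => hsq_le q)
      _ ≤ ∑ q ∈ P, gap q * ℓ q := by
          apply Finset.sum_le_sum_of_subset_of_nonneg (Finset.filter_subset _ _)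
          intro q _ _
          exact hgapℓnn q
  -- assemble
  have hA : (c₀ : ℝ) * (s' - s) ≤ ∑ q ∈ P', ℓ q := by
    rw [← hsum_eq, ← hIntF]
    exact hIlb
  have hAnn : 0 ≤ (c₀ : ℝ) * (s' - s) :=
    mul_nonneg (Nat.cast_nonneg _) (by linarith)
  have hsq : ((c₀ : ℝ) * (s' - s))^2 ≤ (∑ q ∈ P', ℓ q)^2 := by
    apply pow_le_pow_left₀ hAnn hA
  have hfinal : ((c₀ : ℝ) * (s' - s))^2 ≤ W' * (c3 * W' * (s' - s)) := by
    calc ((c₀ : ℝ) * (s' - s))^2 ≤ (∑ q ∈ P', ℓ q)^2 := hsq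
      _ ≤ (P'.card : ℝ) * ∑ q ∈ P', (ℓ q)^2 := hCS
      _ ≤ (P'.card : ℝ) * ∑ q ∈ P, gap q * ℓ q := by
          apply mul_le_mul_of_nonneg_left hsumsq (by positivity)
      _ = W' * ∑ q ∈ P, gap q * ℓ q := by rw [hcardP']
      _ ≤ W' * (c3 * W' * (s' - s)) := by
          apply mul_le_mul_of_nonneg_left _ hW'nn
          rw [← hIntD]
          exact hIub
  -- from hfinal : c₀² (s'-s)² ≤ c3 W'² (s'-s) and φW < c₀:
  have hΔpos : 0 < s' - s := by linarith
  have hφW : φ * W < (c₀ : ℝ) := by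
    rw [hc₀]
    push_cast
    exact Nat.lt_floor_add_one (φ * W)
  have h1 : φ^2 * W^2 < (c₀:ℝ)^2 := by nlinarith [mul_nonneg hφ hWnn]
  have h2 : (c₀:ℝ)^2 * (s' - s) ≤ c3 * W'^2 := by
    apply le_of_mul_le_mul_right _ hΔpos
    nlinarith [hfinal]
  calc φ^2 * W^2 * (s' - s) < (c₀:ℝ)^2 * (s' - s) := by
        exact mul_lt_mul_of_pos_right h1 hΔpos
    _ ≤ c3 * W'^2 := h2

lemma logb_three_ge : (5/4 : ℝ) ≤ Real.logb 2 3 := by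
  have hlog2 : (0:ℝ) < Real.log 2 := Real.log_pos (by norm_num)
  have h32 : Real.log 32 ≤ Real.log 81 := Real.log_le_log (by norm_num) (by norm_num)
  have e1 : Real.log 32 = 5 * Real.log 2 := by
    rw [show (32:ℝ) = 2^(5:ℕ) by norm_num, Real.log_pow]
    push_cast; ring
  have e2 : Real.log 81 = 4 * Real.log 3 := by
    rw [show (81:ℝ) = 3^(4:ℕ) by norm_num, Real.log_pow]
    push_cast; ring
  rw [Real.logb, le_div_iff₀ hlog2]
  linarith

lemma vol_pos_of_mem (G : SimpleGraph V) (hd : ∀ v : V, 0 < G.degree v)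
    {S : Finset V} {u : V} (hu : u ∈ S) : 0 < vol G S := by
  rw [vol]
  exact lt_of_lt_of_le (hd u)
    (Finset.single_le_sum (f := fun v => G.degree v) (fun v _ => Nat.zero_le _) hu)

set_option maxHeartbeats 1000000 in
theorem stmt13 {V : Type*} [Fintype V] (G : SimpleGraph V)
    (m : ℕ) (hm : m = G.edgeFinset.card) (hm2 : 2 ≤ m)
    (hd : ∀ v : V, 0 < G.degree v)
    (α : ℝ) (hα0 : 0 < α) (hα : α ≤ 1 / 3)
    (ε : ℝ) (hε : 0 ≤ ε)
    (p0 : V → ℝ) (hp0 : ∀ v, 0 ≤ p0 v) (hsum : ∑ v, p0 v = 1)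
    (us : List V)
    (p r : V → ℝ)
    (hp : p = (runState G α ((fun _ => 0), p0) us).1)
    (hr : r = (runState G α ((fun _ => 0), p0) us).2)
    (hrε : ∀ v : V, r v / (G.degree v : ℝ) ≤ ε)
    (τ t0 : ℝ) (hτ0 : 0 ≤ τ) (hτt : τ < t0)
    (hvol : vol G (Vlt G p t0) ≤ m)
    (hu : ∃ u : V, p u / (G.degree u : ℝ) < τ) :
    ∃ t : ℝ, τ ≤ t ∧ t < t0 ∧
      conduct G (Vlt G p t) ≤
        Real.sqrt (12 * (t0 + ε) * α * Real.logb 2 (m : ℝ) / (t0 - τ)) := by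
  classical
  have ht0 : 0 < t0 := lt_of_le_of_lt hτ0 hτt
  have ht0ε : 0 < t0 + ε := by linarith
  have hT : 0 < t0 - τ := by linarith
  have hmR : (2:ℝ) ≤ (m:ℝ) := by exact_mod_cast hm2
  have hm0 : (0:ℝ) < (m:ℝ) := by linarith
  set L := Real.logb 2 (m:ℝ) with hLdef
  have hL1 : 1 ≤ L := by
    rw [hLdef]
    calc (1:ℝ) = Real.logb 2 2 := (Real.logb_self_eq_one (by norm_num)).symm
      _ ≤ Real.logb 2 (m:ℝ) := Real.logb_le_logb_of_le (by norm_num) (by norm_num) hmR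
  have hL0 : 0 < L := lt_of_lt_of_le one_pos hL1
  set c3 := 3 * α * (t0 + ε) with hc3def
  have hc3 : 0 < c3 := by rw [hc3def]; positivity
  set B := Real.sqrt (12 * (t0 + ε) * α * L / (t0 - τ)) with hBdef
  have hradpos : 0 < 12 * (t0 + ε) * α * L / (t0 - τ) :=
    div_pos (mul_pos (mul_pos (mul_pos (by norm_num) ht0ε) hα0) hL0) hT
  have hB2 : B^2 = 12 * (t0 + ε) * α * L / (t0 - τ) := Real.sq_sqrt hradpos.le
  have hBpos : 0 < B := Real.sqrt_pos.mpr hradpos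
  -- run-state facts
  obtain ⟨hpnn, hrnn, hmass, hinv⟩ :=
    run_good G α hα0 (by linarith) hd p0 us ((fun _ => 0), p0) (init_good G α p0 hp0)
  have hpnn' : ∀ v, 0 ≤ p v := by intro v; rw [hp]; exact hpnn v
  have hrnn' : ∀ v, 0 ≤ r v := by intro v; rw [hr]; exact hrnn v
  have hmass1 : ∑ v, (p v + r v) = ∑ v, p0 v := by rw [hp, hr]; exact hmass
  have hinv' : ∀ v, p v = α * (p0 v - r v) +
      (1 - α)/2 * (p v + ∑ w ∈ G.neighborFinset v, p w / (G.degree w : ℝ)) := by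
    intro v; rw [hp, hr]; exact hinv v
  have hstar : ∀ y, y ≤ t0 →
      (∑ q ∈ cutpairs G (Vlt G p y),
        (p q.1 / (G.degree q.1 : ℝ) - p q.2 / (G.degree q.2 : ℝ)))
        ≤ c3 * (vol G (Vlt G p y) : ℝ) := by
    intro y hy
    rw [hc3def]
    exact star G hd α hα0 hα ε hε p0 p r hp0 hpnn' hrnn' hmass1 hinv' hrε t0 y hy
  by_contra hcon
  push_neg at hcon
  -- cut lower bound from the contradiction hypothesis
  obtain ⟨u, huτ⟩ := hu
  have humem : ∀ x : ℝ, τ ≤ x → u ∈ Vlt G p x := by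
    intro x hx
    simp only [Vlt, Finset.mem_filter, Finset.mem_univ, true_and]
    linarith
  have hC : ∀ x, τ ≤ x → x < t0 →
      B * (vol G (Vlt G p x) : ℝ) < ((cutpairs G (Vlt G p x)).card : ℝ) := by
    intro x hx1 hx2
    have hvx : vol G (Vlt G p x) ≤ m :=
      le_trans (vol_mono G (Vlt_mono G p (le_of_lt hx2))) hvol
    have hvpos : 0 < vol G (Vlt G p x) := vol_pos_of_mem G hd (humem x hx1)
    have hmin : min (vol G (Vlt G p x)) (2 * G.edgeFinset.card - vol G (Vlt G p x))
        = vol G (Vlt G p x) := by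
      rw [← hm]
      omega
    have hcond := hcon x hx1 hx2
    rw [conduct, hmin, card_bdry_eq] at hcond
    rw [lt_div_iff₀ (by exact_mod_cast hvpos)] at hcond
    linarith [hcond]
  have hband : ∀ s s' : ℝ, τ ≤ s → s < s' → s' ≤ t0 →
      B^2 * ((vol G (Vlt G p s) : ℝ))^2 * (s' - s)
        < c3 * ((vol G (Vlt G p s') : ℝ))^2 :=
    fun s s' h1 h2 h3 => band G p B c3 τ t0 hBpos.le hc3.le hC hstar s s' h1 h2 h3
  set Dst := (t0 - τ) / L with hDst
  have hDstpos : 0 < Dst := div_pos hT hL0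
  have hLT : L * Dst = t0 - τ := by rw [hDst]; field_simp
  have hB2Dst : B^2 * Dst = 4 * c3 := by
    rw [hB2, hDst, hc3def]
    field_simp
    ring
  -- doubling step
  have hdouble : ∀ s s' : ℝ, τ ≤ s → s < s' → s' ≤ t0 → Dst ≤ s' - s →
      2 * vol G (Vlt G p s) < vol G (Vlt G p s') := by
    intro s s' h1 h2 h3 h4
    have hb := hband s s' h1 h2 h3
    set W := (vol G (Vlt G p s) : ℝ) with hWd
    set W' := (vol G (Vlt G p s') : ℝ) with hW'd
    have hWnn : (0:ℝ) ≤ W := Nat.cast_nonneg _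
    have hW'nn : (0:ℝ) ≤ W' := Nat.cast_nonneg _
    have key : 4 * c3 * W^2 ≤ B^2 * W^2 * (s' - s) := by
      calc 4 * c3 * W^2 = B^2 * Dst * W^2 := by rw [hB2Dst]
        _ ≤ B^2 * (s' - s) * W^2 := by
            apply mul_le_mul_of_nonneg_right _ (sq_nonneg W)
            exact mul_le_mul_of_nonneg_left h4 (sq_nonneg B)
        _ = B^2 * W^2 * (s' - s) := by ring
    have h5 : c3 * (4 * W^2) < c3 * W'^2 := by
      calc c3 * (4 * W^2) = 4 * c3 * W^2 := by ring
        _ ≤ B^2 * W^2 * (s' - s) := key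
        _ < c3 * W'^2 := hb
    have h6 : 4 * W^2 < W'^2 := (mul_lt_mul_iff_right₀ hc3).mp h5
    have h7 : 2 * W < W' := by
      apply lt_of_pow_lt_pow_left₀ 2 hW'nn
      calc (2 * W)^2 = 4 * W^2 := by ring
        _ < W'^2 := h6
    rw [hWd, hW'd] at h7
    exact_mod_cast h7
  -- the doubling chain
  set J := ⌊L⌋₊ with hJdef
  have hJ1 : 1 ≤ J := Nat.le_floor (by exact_mod_cast hL1)
  have hJL : (J:ℝ) ≤ L := Nat.floor_le hL0.le
  have hLJ1 : L < (J:ℝ) + 1 := Nat.lt_floor_add_one L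
  have hstep_le : ∀ j : ℕ, (j:ℝ) ≤ L → τ + (j:ℝ) * Dst ≤ t0 := by
    intro j hj
    have : (j:ℝ) * Dst ≤ L * Dst := mul_le_mul_of_nonneg_right hj hDstpos.le
    rw [hLT] at this
    linarith
  have hchain : ∀ j : ℕ, j ≤ J → 2^(j+1) ≤ vol G (Vlt G p (τ + (j:ℝ) * Dst)) + 1 := by
    intro j
    induction j with
    | zero =>
      intro _
      have h0 : τ + ((0:ℕ):ℝ) * Dst = τ := by push_cast; ring
      have hpos : 0 < vol G (Vlt G p (τ + ((0:ℕ):ℝ) * Dst)) := by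
        apply vol_pos_of_mem G hd (humem _ (by rw [h0]))
      calc (2:ℕ)^(0+1) = 2 := by norm_num
        _ ≤ vol G (Vlt G p (τ + ((0:ℕ):ℝ) * Dst)) + 1 := by omega
    | succ j ih =>
      intro hjJ
      have hj : j ≤ J := le_trans (Nat.le_succ j) hjJ
      have ihv := ih hj
      have h1 : τ ≤ τ + (j:ℝ) * Dst := by
        have : (0:ℝ) ≤ (j:ℝ) * Dst := mul_nonneg (Nat.cast_nonneg _) hDstpos.le
        linarith
      have h2 : τ + (j:ℝ) * Dst < τ + ((j+1:ℕ):ℝ) * Dst := by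
        push_cast
        nlinarith [hDstpos]
      have h3 : τ + ((j+1:ℕ):ℝ) * Dst ≤ t0 := by
        apply hstep_le
        have : ((j+1:ℕ):ℝ) ≤ (J:ℝ) := by exact_mod_cast hjJ
        linarith
      have h4 : Dst ≤ (τ + ((j+1:ℕ):ℝ) * Dst) - (τ + (j:ℝ) * Dst) := by
        push_cast
        ring_nf
        nlinarith [hDstpos]
      have hd2 := hdouble _ _ h1 h2 h3 h4
      have hpow : (2:ℕ)^(j+1+1) = 2 * 2^(j+1) := by ring
      omega
  have hJt0 : τ + (J:ℝ) * Dst ≤ t0 := hstep_le J hJL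
  set WJ := vol G (Vlt G p (τ + (J:ℝ) * Dst)) with hWJd
  have hWJm : WJ ≤ m := le_trans (vol_mono G (Vlt_mono G p hJt0)) hvol
  have hWJ2 : 2^(J+1) ≤ WJ + 1 := hchain J le_rfl
  -- m < 2^(J+1)
  have hrpow : (2:ℝ) ^ L = (m:ℝ) := Real.rpow_logb (by norm_num) (by norm_num) hm0
  have hmlt : m < 2^(J+1) := by
    have h1 : (2:ℝ) ^ L < (2:ℝ) ^ (((J+1:ℕ)):ℝ) := by
      apply Real.rpow_lt_rpow_of_exponent_lt (by norm_num)
      push_cast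
      exact hLJ1
    rw [hrpow, Real.rpow_natCast] at h1
    exact_mod_cast h1
  have hpoweq : 2^(J+1) = m + 1 := by omega
  have hWJeqm : m ≤ WJ := by omega
  -- J < L strictly
  have hJltL : (J:ℝ) < L := by
    rcases lt_or_eq_of_le hJL with h | h
    · exact h
    · exfalso
      have h1 : (2:ℝ) ^ ((J:ℕ):ℝ) = (m:ℝ) := by rw [h]; exact hrpow
      rw [Real.rpow_natCast] at h1
      have h2 : (2:ℕ)^J = m := by exact_mod_cast h1
      have h3 : (2:ℕ)^(J+1) = 2 * 2^J := by ring
      have h4 : (2:ℕ)^J ≥ 2 := by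
        calc (2:ℕ)^J ≥ 2^1 := Nat.pow_le_pow_right (by norm_num) hJ1
          _ = 2 := by norm_num
      omega
  -- L ≥ J + 1/4
  have hLq : (J:ℝ) + 1/4 ≤ L := by
    have hm3 : 3 * 2^(J-1) ≤ m := by
      have h4 : (2:ℕ)^(J+1) = 4 * 2^(J-1) := by
        rw [show J + 1 = (J-1) + 2 by omega, pow_add]
        ring
      have h5 : 1 ≤ (2:ℕ)^(J-1) := Nat.one_le_two_pow
      omega
    have hcastpos : (0:ℝ) < ((3 * 2^(J-1) : ℕ) : ℝ) := by positivity
    have hmono : Real.logb 2 ((3 * 2^(J-1) : ℕ) : ℝ) ≤ L := by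
      rw [hLdef]
      apply Real.logb_le_logb_of_le (by norm_num) hcastpos
      exact_mod_cast hm3
    have hsplit : Real.logb 2 ((3 * 2^(J-1) : ℕ) : ℝ)
        = Real.logb 2 3 + ((J-1 : ℕ) : ℝ) := by
      push_cast
      rw [Real.logb_mul (by norm_num) (by positivity), Real.logb_pow,
        Real.logb_self_eq_one (by norm_num)]
      ring
    have hJm1 : ((J-1:ℕ):ℝ) = (J:ℝ) - 1 := by
      have : (1:ℕ) ≤ J := hJ1
      push_cast [this]
      ring
    rw [hsplit, hJm1] at hmono
    linarith [logb_three_ge]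
  -- final band application on the leftover interval
  have hsL : τ + (J:ℝ) * Dst < t0 := by
    have : (J:ℝ) * Dst < L * Dst := mul_lt_mul_of_pos_right hJltL hDstpos
    rw [hLT] at this
    linarith
  have hgap : (t0 - τ)/(4*L) ≤ t0 - (τ + (J:ℝ) * Dst) := by
    have h1 : (1/4) * Dst ≤ (L - (J:ℝ)) * Dst := by
      apply mul_le_mul_of_nonneg_right _ hDstpos.le
      linarith
    have h2 : (L - (J:ℝ)) * Dst = t0 - τ - (J:ℝ) * Dst := by
      rw [sub_mul, hLT]
    rw [h2] at h1
    rw [hDst] at h1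
    calc (t0 - τ)/(4*L) = (1/4) * ((t0-τ)/L) := by ring
      _ ≤ t0 - τ - (J:ℝ) * Dst := h1
      _ = t0 - (τ + (J:ℝ) * Dst) := by ring
  have h1τ : τ ≤ τ + (J:ℝ) * Dst := by
    have : (0:ℝ) ≤ (J:ℝ) * Dst := mul_nonneg (Nat.cast_nonneg _) hDstpos.le
    linarith
  have hb := hband (τ + (J:ℝ) * Dst) t0 h1τ hsL le_rfl
  rw [← hWJd] at hb
  have hBq : B^2 * ((t0 - τ)/(4*L)) = c3 := by
    rw [hB2, hc3def]
    field_simp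
    ring
  have hkey2 : c3 * ((WJ:ℕ):ℝ)^2 ≤ B^2 * ((WJ:ℕ):ℝ)^2 * (t0 - (τ + (J:ℝ) * Dst)) := by
    calc c3 * ((WJ:ℕ):ℝ)^2 = B^2 * ((t0 - τ)/(4*L)) * ((WJ:ℕ):ℝ)^2 := by rw [hBq]
      _ ≤ B^2 * (t0 - (τ + (J:ℝ) * Dst)) * ((WJ:ℕ):ℝ)^2 := by
          apply mul_le_mul_of_nonneg_right _ (sq_nonneg _)
          exact mul_le_mul_of_nonneg_left hgap (sq_nonneg B)
      _ = B^2 * ((WJ:ℕ):ℝ)^2 * (t0 - (τ + (J:ℝ) * Dst)) := by ring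
  have hlt : c3 * ((WJ:ℕ):ℝ)^2 < c3 * ((vol G (Vlt G p t0) : ℕ):ℝ)^2 :=
    lt_of_le_of_lt hkey2 hb
  have h6 : ((WJ:ℕ):ℝ)^2 < ((vol G (Vlt G p t0) : ℕ):ℝ)^2 := (mul_lt_mul_iff_right₀ hc3).mp hlt
  have h7 : WJ < vol G (Vlt G p t0) := by
    have := lt_of_pow_lt_pow_left₀ 2 (Nat.cast_nonneg _ : (0:ℝ) ≤ ((vol G (Vlt G p t0) : ℕ):ℝ)) h6
    exact_mod_cast this
  omega


end
end
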